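/- arXiv:2005.12448 — 6 statements merged into one kernel-verified Lean document; each statement's English description precedes it below -/
import Mathlib

section
/- For every alternating sign matrix A of size n, the number of −1 entries plus the inversion number plus the complementary inversion number equals n(n−1)/2, i.e. 𝒩(A) + inv(A) + inv′(A) = C(n,2). -/
/-- An alternating sign matrix: entries in `{-1,0,1}`, all row and column sums equal `1`,
and the non-zero entries alternate in sign along every row and column (equivalently,
all partial row sums and partial column sums are `0` or `1`). -/
def IsASM (n : ℕ) (A : Matrix (Fin n) (Fin n) ℤ) : Prop :=
  (∀ i j, A i j = -1 ∨ A i j = 0 ∨ A i j = 1) ∧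
  (∀ i, ∑ j, A i j = 1) ∧
  (∀ j, ∑ i, A i j = 1) ∧
  (∀ i j, (∑ j' ∈ Finset.Iic j, A i j') = 0 ∨ (∑ j' ∈ Finset.Iic j, A i j') = 1) ∧
  (∀ i j, (∑ i' ∈ Finset.Iic i, A i' j) = 0 ∨ (∑ i' ∈ Finset.Iic i, A i' j) = 1)

/-- `inv(A) = ∑_{i'<i, j'≤j} a_{i',j} a_{i,j'}`; here a summand is indexed by the pair of
positions `((i',j),(i,j'))`. -/
def invASM (n : ℕ) (A : Matrix (Fin n) (Fin n) ℤ) : ℤ :=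
  ∑ q ∈ (Finset.univ : Finset ((Fin n × Fin n) × (Fin n × Fin n))).filter
      (fun q => q.1.1 < q.2.1 ∧ q.2.2 ≤ q.1.2),
    A q.1.1 q.1.2 * A q.2.1 q.2.2

/-- `inv'(A) = ∑_{i'<i, j≤j'} a_{i',j} a_{i,j'}`. -/
def invASM' (n : ℕ) (A : Matrix (Fin n) (Fin n) ℤ) : ℤ :=
  ∑ q ∈ (Finset.univ : Finset ((Fin n × Fin n) × (Fin n × Fin n))).filter
      (fun q => q.1.1 < q.2.1 ∧ q.1.2 ≤ q.2.2),
    A q.1.1 q.1.2 * A q.2.1 q.2.2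

/-- `𝒩(A)`, the number of `-1` entries of `A`. -/
def numNegOnes (n : ℕ) (A : Matrix (Fin n) (Fin n) ℤ) : ℕ :=
  ((Finset.univ : Finset (Fin n × Fin n)).filter (fun p => A p.1 p.2 = -1)).card

lemma gauss_aux (n : ℕ) : ∑ i ∈ Finset.range n, i = n.choose 2 := by
  induction n with
  | zero => simp
  | succ n ih => rw [Finset.sum_range_succ, ih, Nat.choose_succ_succ]
                 simp [Nat.choose_one_right, Nat.add_comm]

lemma sq_sum_aux {n : ℕ} (g : Fin n → ℤ) :
    (∑ i, g i) * (∑ i, g i)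
      = 2 * (∑ p ∈ (Finset.univ : Finset (Fin n × Fin n)).filter (fun p => p.1 < p.2),
          g p.1 * g p.2) + ∑ i, g i * g i := by
  have h0 : (∑ i, g i) * (∑ i, g i) = ∑ p : Fin n × Fin n, g p.1 * g p.2 := by
    rw [Fintype.sum_mul_sum]; exact (Fintype.sum_prod_type (f := fun p : Fin n × Fin n => g p.1 * g p.2)).symm
  rw [h0, ← Finset.sum_filter_add_sum_filter_not Finset.univ (fun p : Fin n × Fin n => p.1 < p.2),
    ← Finset.sum_filter_add_sum_filter_not
      ((Finset.univ : Finset (Fin n × Fin n)).filter (fun p => ¬ p.1 < p.2))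
      (fun p : Fin n × Fin n => p.2 < p.1)]
  have h1 : ∑ p ∈ (((Finset.univ : Finset (Fin n × Fin n)).filter (fun p => ¬ p.1 < p.2)).filter
      (fun p => p.2 < p.1)), g p.1 * g p.2
      = ∑ p ∈ (Finset.univ : Finset (Fin n × Fin n)).filter (fun p => p.1 < p.2),
          g p.1 * g p.2 := by
    refine Finset.sum_nbij' Prod.swap Prod.swap ?_ ?_ ?_ ?_ ?_ <;>
      simp +contextual [Prod.swap, mul_comm, asymm]
    intro a b h; exact h.le
  have h2 : ∑ p ∈ (((Finset.univ : Finset (Fin n × Fin n)).filter (fun p => ¬ p.1 < p.2)).filter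
      (fun p => ¬ p.2 < p.1)), g p.1 * g p.2 = ∑ i, g i * g i := by
    refine Finset.sum_nbij' Prod.fst (fun i => (i, i)) ?_ ?_ ?_ ?_ ?_ <;>
      simp +contextual [le_antisymm_iff, Prod.ext_iff]
    intro a b h1 h2; rw [le_antisymm h2 h1]; exact ⟨le_refl _, le_refl _⟩
  rw [h1, h2]; ring


/-- For every ASM `A` of size `n`: `𝒩(A) + inv(A) + inv'(A) = C(n,2)`. -/
theorem stmt_3 (n : ℕ) (A : Matrix (Fin n) (Fin n) ℤ) (hA : IsASM n A) :
    (numNegOnes n A : ℤ) + invASM n A + invASM' n A = (n.choose 2 : ℤ) := by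
  obtain ⟨hval, hrow, hcol, -, -⟩ := hA
  -- Step A: combine the two inversion sums
  have key : invASM n A + invASM' n A
      = (∑ q ∈ (Finset.univ : Finset ((Fin n × Fin n) × (Fin n × Fin n))).filter
            (fun q => q.1.1 < q.2.1), A q.1.1 q.1.2 * A q.2.1 q.2.2)
        + (∑ q ∈ (Finset.univ : Finset ((Fin n × Fin n) × (Fin n × Fin n))).filter
            (fun q => q.1.1 < q.2.1 ∧ q.1.2 = q.2.2), A q.1.1 q.1.2 * A q.2.1 q.2.2) := by
    unfold invASM invASM'
    rw [Finset.sum_filter, Finset.sum_filter, Finset.sum_filter, Finset.sum_filter,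
        ← Finset.sum_add_distrib, ← Finset.sum_add_distrib]
    refine Finset.sum_congr rfl fun q _ => ?_
    by_cases h : q.1.1 < q.2.1
    · rcases lt_trichotomy q.1.2 q.2.2 with hlt | heq | hgt
      · simp [h, hlt.le, hlt.ne, not_le.mpr hlt]
      · simp [h, heq]
      · simp [h, hgt.le, hgt.ne', not_le.mpr hgt]
    · simp [h]
  -- Step B: the unrestricted part equals choose n 2
  have hT1 : (∑ q ∈ (Finset.univ : Finset ((Fin n × Fin n) × (Fin n × Fin n))).filter
        (fun q => q.1.1 < q.2.1), A q.1.1 q.1.2 * A q.2.1 q.2.2) = (n.choose 2 : ℤ) := by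
    rw [Finset.sum_filter]
    simp only [Fintype.sum_prod_type]
    have step : ∀ i' i : Fin n,
        (∑ j : Fin n, ∑ j' : Fin n, if i' < i then A i' j * A i j' else 0)
          = if i' < i then 1 else 0 := by
      intro i' i
      by_cases h : i' < i
      · simp only [h, if_true]
        rw [← Fintype.sum_mul_sum, hrow, hrow, one_mul]
      · simp [h]
    calc (∑ i' : Fin n, ∑ j : Fin n, ∑ i : Fin n, ∑ j' : Fin n,
            if i' < i then A i' j * A i j' else 0)
        = ∑ i' : Fin n, ∑ i : Fin n, ∑ j : Fin n, ∑ j' : Fin n,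
            if i' < i then A i' j * A i j' else 0 := by
          exact Finset.sum_congr rfl fun i' _ => Finset.sum_comm
      _ = ∑ i' : Fin n, ∑ i : Fin n, if i' < i then (1:ℤ) else 0 := by
          exact Finset.sum_congr rfl fun i' _ => Finset.sum_congr rfl fun i _ => step i' i
      _ = ∑ i : Fin n, ∑ i' : Fin n, if i' < i then (1:ℤ) else 0 := Finset.sum_comm
      _ = ∑ i : Fin n, (i.val : ℤ) := by
          refine Finset.sum_congr rfl fun i _ => ?_
          rw [Finset.sum_boole]
          have : Finset.filter (fun x => x < i) Finset.univ = Finset.Iio i := by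
            ext x; simp
          rw [this, Fin.card_Iio]
      _ = (n.choose 2 : ℤ) := by
          rw [Fin.sum_univ_eq_sum_range (fun i => (i : ℤ)) n]
          rw [← Nat.cast_sum, gauss_aux]
  -- Step C: the diagonal part equals -N
  have reshape : (∑ q ∈ (Finset.univ : Finset ((Fin n × Fin n) × (Fin n × Fin n))).filter
        (fun q => q.1.1 < q.2.1 ∧ q.1.2 = q.2.2), A q.1.1 q.1.2 * A q.2.1 q.2.2)
      = ∑ j : Fin n, ∑ p ∈ (Finset.univ : Finset (Fin n × Fin n)).filter (fun p => p.1 < p.2),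
          A p.1 j * A p.2 j := by
    rw [Finset.sum_filter]
    simp only [Fintype.sum_prod_type]
    have inner : ∀ (i' j i : Fin n),
        (∑ j' : Fin n, if i' < i ∧ j = j' then A i' j * A i j' else 0)
          = if i' < i then A i' j * A i j else 0 := by
      intro i' j i
      by_cases h : i' < i
      · simp [h, Finset.sum_ite_eq]
      · simp [h]
    calc (∑ i' : Fin n, ∑ j : Fin n, ∑ i : Fin n, ∑ j' : Fin n,
            if i' < i ∧ j = j' then A i' j * A i j' else 0)
        = ∑ i' : Fin n, ∑ j : Fin n, ∑ i : Fin n,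
            if i' < i then A i' j * A i j else 0 := by
          refine Finset.sum_congr rfl fun i' _ => Finset.sum_congr rfl fun j _ =>
            Finset.sum_congr rfl fun i _ => inner i' j i
      _ = ∑ j : Fin n, ∑ i' : Fin n, ∑ i : Fin n,
            if i' < i then A i' j * A i j else 0 := Finset.sum_comm
      _ = ∑ j : Fin n, ∑ p ∈ (Finset.univ : Finset (Fin n × Fin n)).filter (fun p => p.1 < p.2),
            A p.1 j * A p.2 j := by
          refine Finset.sum_congr rfl fun j _ => ?_
          rw [Finset.sum_filter]
          exact (Fintype.sum_prod_type
            (f := fun p : Fin n × Fin n => if p.1 < p.2 then A p.1 j * A p.2 j else 0)).symm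
  have colkey : ∀ j : Fin n,
      2 * (∑ p ∈ (Finset.univ : Finset (Fin n × Fin n)).filter (fun p => p.1 < p.2),
          A p.1 j * A p.2 j) + ∑ i : Fin n, A i j * A i j = 1 := by
    intro j
    have := sq_sum_aux (fun i => A i j)
    rw [hcol j] at this
    linarith
  have hsq : (∑ j : Fin n, ∑ i : Fin n, A i j * A i j)
      = (n : ℤ) + 2 * (numNegOnes n A : ℤ) := by
    have pt : ∀ i j : Fin n, A i j * A i j = A i j + 2 * (if A i j = -1 then (1:ℤ) else 0) := by
      intro i j
      rcases hval i j with h | h | h <;> simp [h]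
    have h1 : (∑ j : Fin n, ∑ i : Fin n, A i j * A i j)
        = (∑ j : Fin n, ∑ i : Fin n, A i j)
          + 2 * ∑ j : Fin n, ∑ i : Fin n, (if A i j = -1 then (1:ℤ) else 0) := by
      rw [Finset.mul_sum, ← Finset.sum_add_distrib]
      refine Finset.sum_congr rfl fun j _ => ?_
      rw [Finset.mul_sum, ← Finset.sum_add_distrib]
      exact Finset.sum_congr rfl fun i _ => pt i j
    have h2 : (∑ j : Fin n, ∑ i : Fin n, A i j) = (n : ℤ) := by
      simp [hcol]
    have h3 : (∑ j : Fin n, ∑ i : Fin n, (if A i j = -1 then (1:ℤ) else 0))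
        = (numNegOnes n A : ℤ) := by
      rw [Finset.sum_comm]
      rw [show (∑ i : Fin n, ∑ j : Fin n, (if A i j = -1 then (1:ℤ) else 0))
          = ∑ p : Fin n × Fin n, (if A p.1 p.2 = -1 then (1:ℤ) else 0) from
        (Fintype.sum_prod_type
          (f := fun p : Fin n × Fin n => if A p.1 p.2 = -1 then (1:ℤ) else 0)).symm]
      rw [Finset.sum_boole]
      rfl
    rw [h1, h2, h3]
  have hT2 : (∑ q ∈ (Finset.univ : Finset ((Fin n × Fin n) × (Fin n × Fin n))).filter
        (fun q => q.1.1 < q.2.1 ∧ q.1.2 = q.2.2), A q.1.1 q.1.2 * A q.2.1 q.2.2)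
      = -(numNegOnes n A : ℤ) := by
    rw [reshape]
    have hsumcol : 2 * (∑ j : Fin n, ∑ p ∈ (Finset.univ : Finset (Fin n × Fin n)).filter
          (fun p => p.1 < p.2), A p.1 j * A p.2 j)
        + ∑ j : Fin n, ∑ i : Fin n, A i j * A i j = (n : ℤ) := by
      rw [Finset.mul_sum, ← Finset.sum_add_distrib]
      simp only [colkey]
      simp
    rw [hsq] at hsumcol
    linarith
  linarith
end

section
/- The number of modified balanced partitions of size n is the n-th Catalan number C_n = (1/(n+1))·C(2n,n). -/
open Finset DyckStep
set_option linter.unusedSectionVars false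
set_option maxHeartbeats 1000000

namespace MBP

variable {n : ℕ}

/-- conjugate column count -/
def cc (n : ℕ) (f : Fin n → Fin n) (j : ℕ) : ℕ :=
  #(Finset.univ.filter fun i : Fin n => j + 1 ≤ (f i : ℕ))

/-- superdiagonal counts -/
def rr (n : ℕ) (f : Fin n → Fin n) (k : ℕ) : ℕ :=
  #(Finset.univ.filter fun i : Fin n => k + (i : ℕ) + 1 ≤ (f i : ℕ))

/-- subdiagonal counts -/
def ss (n : ℕ) (f : Fin n → Fin n) (k : ℕ) : ℕ :=
  #(Finset.univ.filter fun j : Fin n => k + (j : ℕ) + 1 ≤ cc n f j)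

lemma fin_down (F : Finset (Fin n)) (h : ∀ i j : Fin n, i ≤ j → j ∈ F → i ∈ F)
    (i : Fin n) : i ∈ F ↔ (i : ℕ) < F.card := by
  constructor
  · intro hi
    have hs : Finset.Iic i ⊆ F := fun j hj => h j i (Finset.mem_Iic.mp hj) hi
    have := Finset.card_le_card hs
    rw [Fin.card_Iic] at this
    omega
  · intro hi
    by_contra hni
    have hs : F ⊆ Finset.Iio i := by
      intro j hj
      rw [Finset.mem_Iio]
      rcases lt_or_ge j i with h' | h'
      · exact h'
      · exact absurd (h i j h' hj) hni
    have := Finset.card_le_card hs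
    rw [Fin.card_Iio] at this
    omega

variable {f : Fin n → Fin n} (hf : ∀ i j : Fin n, i ≤ j → f j ≤ f i)

include hf in
lemma mem_cc (i : Fin n) (j : ℕ) : j + 1 ≤ (f i : ℕ) ↔ (i : ℕ) < cc n f j := by
  unfold cc
  rw [← fin_down _ (fun a b hab hb => ?_) i, Finset.mem_filter]
  · simp
  · simp only [Finset.mem_filter, Finset.mem_univ, true_and] at hb ⊢
    exact le_trans hb (hf a b hab)

include hf in
lemma mem_rr (i : Fin n) (k : ℕ) : k + (i : ℕ) + 1 ≤ (f i : ℕ) ↔ (i : ℕ) < rr n f k := by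
  unfold rr
  rw [← fin_down _ (fun a b hab hb => ?_) i, Finset.mem_filter]
  · simp
  · simp only [Finset.mem_filter, Finset.mem_univ, true_and] at hb ⊢
    have := hf a b hab
    have : (f b : ℕ) ≤ f a := this
    have : (a : ℕ) ≤ b := hab
    omega

lemma cc_le (j : ℕ) : cc n f j ≤ n := by
  have := Finset.card_le_card (Finset.filter_subset (fun i : Fin n => j + 1 ≤ (f i : ℕ)) Finset.univ)
  simpa [cc] using this

lemma cc_anti {j j' : ℕ} (h : j ≤ j') : cc n f j' ≤ cc n f j := by
  apply Finset.card_le_card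
  intro i hi
  rw [Finset.mem_filter] at hi ⊢
  exact ⟨hi.1, by omega⟩

include hf in
lemma mem_ss (j : Fin n) (k : ℕ) : k + (j : ℕ) + 1 ≤ cc n f j ↔ (j : ℕ) < ss n f k := by
  unfold ss
  rw [← fin_down _ (fun a b hab hb => ?_) j, Finset.mem_filter]
  · simp
  · simp only [Finset.mem_filter, Finset.mem_univ, true_and] at hb ⊢
    have h1 : cc n f b ≤ cc n f a := cc_anti hab
    have : (a : ℕ) ≤ b := hab
    omega


lemma rr_anti (k : ℕ) : rr n f (k + 1) ≤ rr n f k := by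
  apply Finset.card_le_card
  intro i hi
  rw [Finset.mem_filter] at hi ⊢
  exact ⟨hi.1, by omega⟩

lemma rr_le (k : ℕ) : rr n f k ≤ n := by
  have := Finset.card_le_card
    (Finset.filter_subset (fun i : Fin n => k + (i : ℕ) + 1 ≤ (f i : ℕ)) Finset.univ)
  simpa [rr] using this

lemma ss_le (k : ℕ) : ss n f k ≤ n := by
  have := Finset.card_le_card
    (Finset.filter_subset (fun j : Fin n => k + (j : ℕ) + 1 ≤ cc n f j) Finset.univ)
  simpa [ss] using this

lemma ss_anti (k : ℕ) : ss n f (k + 1) ≤ ss n f k := by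
  apply Finset.card_le_card
  intro i hi
  rw [Finset.mem_filter] at hi ⊢
  exact ⟨hi.1, by omega⟩

include hf in
lemma rr_step (k : ℕ) : rr n f k ≤ rr n f (k + 1) + 1 := by
  by_contra hcon
  push_neg at hcon
  have h2 : rr n f (k + 1) + 1 < n := lt_of_lt_of_le hcon (rr_le k)
  set m := rr n f (k + 1) with hm
  have hi : (⟨m + 1, h2⟩ : Fin n) ∈ Finset.univ.filter
      fun i : Fin n => k + (i : ℕ) + 1 ≤ (f i : ℕ) := by
    rw [Finset.mem_filter]
    refine ⟨Finset.mem_univ _, ?_⟩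
    have := (mem_rr hf ⟨m + 1, h2⟩ k).mpr (by simpa using hcon)
    simpa using this
  have h3 : (m : ℕ) < n := by omega
  have hle : (⟨m, h3⟩ : Fin n) ≤ (⟨m + 1, h2⟩ : Fin n) := by simp [Fin.le_def]
  have h4 : k + (⟨m + 1, h2⟩ : Fin n) + 1 ≤ (f ⟨m + 1, h2⟩ : ℕ) := by
    rw [Finset.mem_filter] at hi; exact hi.2
  have h5 : (f ⟨m + 1, h2⟩ : ℕ) ≤ f ⟨m, h3⟩ := hf _ _ hle
  have h6 : (k + 1) + ((⟨m, h3⟩ : Fin n) : ℕ) + 1 ≤ (f ⟨m, h3⟩ : ℕ) := by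
    simp only [Fin.val_mk] at h4 h5 ⊢; omega
  have := (mem_rr hf ⟨m, h3⟩ (k + 1)).mp h6
  simp only [Fin.val_mk] at this
  omega

include hf in
lemma ss_step (k : ℕ) : ss n f k ≤ ss n f (k + 1) + 1 := by
  by_contra hcon
  push_neg at hcon
  have h2 : ss n f (k + 1) + 1 < n := lt_of_lt_of_le hcon (ss_le k)
  set m := ss n f (k + 1) with hm
  have h3 : (m : ℕ) < n := by omega
  have h4 : k + (⟨m + 1, h2⟩ : Fin n) + 1 ≤ cc n f (⟨m + 1, h2⟩ : Fin n) := by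
    exact (mem_ss hf ⟨m + 1, h2⟩ k).mpr (by simpa using hcon)
  have h5 : cc n f ((⟨m + 1, h2⟩ : Fin n) : ℕ) ≤ cc n f ((⟨m, h3⟩ : Fin n) : ℕ) :=
    cc_anti (by simp)
  have h6 : (k + 1) + ((⟨m, h3⟩ : Fin n) : ℕ) + 1 ≤ cc n f ((⟨m, h3⟩ : Fin n) : ℕ) := by
    simp only [Fin.val_mk] at h4 h5 ⊢; omega
  have := (mem_ss hf ⟨m, h3⟩ (k + 1)).mp h6
  simp only [Fin.val_mk] at this
  omega

lemma rr_van (k : ℕ) (hk : n ≤ k) : rr n f k = 0 := by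
  rw [rr, Finset.card_eq_zero, Finset.filter_eq_empty_iff]
  intro i _
  have := (f i).isLt
  omega

lemma ss_van (k : ℕ) (hk : n ≤ k) : ss n f k = 0 := by
  rw [ss, Finset.card_eq_zero, Finset.filter_eq_empty_iff]
  intro j _
  have := cc_le (f := f) (j : ℕ)
  omega

include hf in
lemma rr_zero_eq_ss_zero : rr n f 0 = ss n f 0 := by
  unfold rr ss
  congr 1
  apply Finset.filter_congr
  intro i _
  simp only [zero_add, eq_iff_iff]
  have := mem_cc hf i (i : ℕ)
  constructor
  · intro h
    have h2 := (mem_cc hf i (i : ℕ)).mp (by omega)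
    omega
  · intro h
    have h2 := (mem_cc hf i (i : ℕ)).mpr (by omega)
    omega

include hf in
lemma cond_iff :
    (∀ i : Fin n, (i : ℕ) + 1 ≤ (f i : ℕ) → (f i : ℕ) < cc n f (i : ℕ)) ↔
      ∀ k, rr n f k ≤ ss n f (k + 1) := by
  constructor
  · intro hcond k
    apply Finset.card_le_card
    intro i hi
    rw [Finset.mem_filter] at hi ⊢
    refine ⟨Finset.mem_univ _, ?_⟩
    have h1 : (i : ℕ) + 1 ≤ (f i : ℕ) := by omega
    have h2 := hcond i h1
    omega
  · intro hdom i h1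
    set k := (f i : ℕ) - ((i : ℕ) + 1) with hk
    have hki : k + (i : ℕ) + 1 = (f i : ℕ) := by omega
    have h2 : (i : ℕ) < rr n f k := (mem_rr hf i k).mp (by omega)
    have h3 : (i : ℕ) < ss n f (k + 1) := lt_of_lt_of_le h2 (hdom k)
    have h4 := (mem_ss hf i (k + 1)).mpr h3
    omega


/-! ### Profile pairs -/

structure Cond (n : ℕ) (R S : ℕ → ℕ) : Prop where
  zero : R 0 = S 0
  rant : ∀ k, R (k + 1) ≤ R k
  rstep : ∀ k, R k ≤ R (k + 1) + 1
  sant : ∀ k, S (k + 1) ≤ S k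
  sstep : ∀ k, S k ≤ S (k + 1) + 1
  rvan : ∀ k, n ≤ k → R k = 0
  svan : ∀ k, n ≤ k → S k = 0
  dom : ∀ k, R k ≤ S (k + 1)

lemma anti_of {g : ℕ → ℕ} (hstep : ∀ k, g (k + 1) ≤ g k) :
    ∀ j k, j ≤ k → g k ≤ g j := by
  intro j k hjk
  induction k with
  | zero => have : j = 0 := by omega
            subst this; exact le_rfl
  | succ m ih =>
    rcases Nat.lt_or_ge j (m + 1) with h | h
    · exact le_trans (hstep m) (ih (by omega))
    · have : j = m + 1 := by omega
      subst this; exact le_rfl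

lemma step_of {g : ℕ → ℕ} (hstep : ∀ k, g k ≤ g (k + 1) + 1) :
    ∀ j k, j ≤ k → g j ≤ g k + (k - j) := by
  intro j k hjk
  induction k with
  | zero => have : j = 0 := by omega
            subst this; simp
  | succ m ih =>
    rcases Nat.lt_or_ge j (m + 1) with h | h
    · have h1 := hstep m
      have h2 := ih (by omega)
      omega
    · have : j = m + 1 := by omega
      subst this; simp

namespace Cond

variable {R S : ℕ → ℕ} (h : Cond n R S)

include h

lemma r_bound (k : ℕ) : R k + k ≤ n ∨ R k = 0 := by
  rcases Nat.lt_or_ge k n with hk | hk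
  · left
    have := step_of h.rstep k n (by omega)
    have := h.rvan n le_rfl
    omega
  · right; exact h.rvan k hk

lemma s_bound (k : ℕ) : S k + k ≤ n ∨ S k = 0 := by
  rcases Nat.lt_or_ge k n with hk | hk
  · left
    have := step_of h.sstep k n (by omega)
    have := h.svan n le_rfl
    omega
  · right; exact h.svan k hk

lemma r_le (k : ℕ) : R k ≤ n := by rcases h.r_bound k with h' | h' <;> omega

lemma s_le (k : ℕ) : S k ≤ n := by rcases h.s_bound k with h' | h' <;> omega

lemma s_lower (j : ℕ) : S 0 ≤ S j + j := step_of h.sstep 0 j (by omega)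

end Cond

/-- the cell predicate built from profiles -/
def P (R S : ℕ → ℕ) (i c : ℕ) : Prop :=
  if i ≤ c then i + 1 ≤ R (c - i) else c + 1 ≤ S (i - c)

instance (R S : ℕ → ℕ) (i c : ℕ) : Decidable (P R S i c) := by
  unfold P; infer_instance

variable {R S : ℕ → ℕ}

lemma P_row_step (h : Cond n R S) (i c : ℕ) (hp : P R S i (c + 1)) : P R S i c := by
  unfold P at hp ⊢
  rcases Nat.lt_or_ge c i with hc | hc
  · rcases Nat.lt_or_ge (c + 1) i with hc1 | hc1
    · rw [if_neg (by omega)] at hp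
      rw [if_neg (by omega)]
      have h1 := h.sstep (i - (c + 1))
      have heq : i - c = (i - (c + 1)) + 1 := by omega
      rw [heq]
      omega
    · -- c + 1 = i
      have heq : c + 1 = i := by omega
      rw [if_pos (by omega), show c + 1 - i = 0 by omega] at hp
      rw [if_neg (by omega), show i - c = 1 by omega]
      have h1 := h.sstep 0
      rw [zero_add] at h1
      have h2 := h.zero
      omega
  · rw [if_pos (by omega)] at hp
    rw [if_pos hc]
    have := anti_of h.rant (c - i) (c + 1 - i) (by omega)
    omega

lemma P_row (h : Cond n R S) (i : ℕ) {c c' : ℕ} (hcc : c' ≤ c) (hp : P R S i c) :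
    P R S i c' := by
  obtain ⟨m, rfl⟩ : ∃ m, c = c' + m := ⟨c - c', by omega⟩
  clear hcc
  induction m with
  | zero => simpa using hp
  | succ t ih =>
    rw [Nat.add_succ] at hp
    exact ih (P_row_step h i (c' + t) hp)

lemma P_col_step (h : Cond n R S) (i c : ℕ) (hp : P R S (i + 1) c) : P R S i c := by
  unfold P at hp ⊢
  rcases Nat.lt_or_ge c i with hc | hc
  · rw [if_neg (by omega)] at hp
    rw [if_neg (by omega)]
    have := anti_of h.sant (i - c) (i + 1 - c) (by omega)
    omega
  · rcases Nat.lt_or_ge c (i + 1) with hc1 | hc1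
    · -- c = i
      have heq : c = i := by omega
      rw [if_neg (by omega), show i + 1 - c = 1 by omega] at hp
      rw [if_pos (by omega), show c - i = 0 by omega]
      have h1 := h.sant 0
      rw [zero_add] at h1
      have h2 := h.zero
      omega
    · rw [if_pos (by omega)] at hp
      rw [if_pos (by omega)]
      have h1 := h.rstep (c - (i + 1))
      have heq : c - i = (c - (i + 1)) + 1 := by omega
      rw [heq]
      omega

lemma P_col (h : Cond n R S) {i i' : ℕ} (c : ℕ) (hii : i' ≤ i) (hp : P R S i c) :
    P R S i' c := by
  obtain ⟨m, rfl⟩ : ∃ m, i = i' + m := ⟨i - i', by omega⟩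
  clear hii
  induction m with
  | zero => simpa using hp
  | succ t ih =>
    rw [Nat.add_succ] at hp
    exact ih (P_col_step h (i' + t) c hp)

lemma P_big (h : Cond n R S) (i c : ℕ) (hc : n ≤ c) : ¬ P R S i c := by
  unfold P
  intro hp
  rcases Nat.lt_or_ge c i with hlt | hle
  · rw [if_neg (by omega)] at hp
    rcases h.s_bound (i - c) with h' | h' <;> omega
  · rw [if_pos (by omega)] at hp
    rcases h.r_bound (c - i) with h' | h' <;> omega

/-- reconstruction of the partition from profiles -/
def recon (n : ℕ) (R S : ℕ → ℕ) (i : ℕ) : ℕ :=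
  #((Finset.range n).filter fun c => P R S i c)

lemma nat_down (F : Finset ℕ) (hd : ∀ a b : ℕ, a ≤ b → b ∈ F → a ∈ F) :
    F = Finset.range F.card := by
  have hsub : F ⊆ Finset.range F.card := by
    intro j hj
    rw [Finset.mem_range]
    have : Finset.range (j + 1) ⊆ F := by
      intro a ha
      rw [Finset.mem_range] at ha
      exact hd a j (by omega) hj
    have := Finset.card_le_card this
    rw [Finset.card_range] at this
    omega
  exact Finset.eq_of_subset_of_card_le hsub (by rw [Finset.card_range])

lemma recon_mem (h : Cond n R S) (i c : ℕ) : P R S i c ↔ c < recon n R S i := by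
  have hd : ∀ a b : ℕ, a ≤ b → b ∈ (Finset.range n).filter (fun c => P R S i c) →
      a ∈ (Finset.range n).filter (fun c => P R S i c) := by
    intro a b hab hb
    rw [Finset.mem_filter, Finset.mem_range] at hb ⊢
    exact ⟨by omega, P_row h i hab hb.2⟩
  have heq := nat_down _ hd
  constructor
  · intro hp
    have hcn : c < n := by
      by_contra hc
      exact P_big h i c (by omega) hp
    have : c ∈ (Finset.range n).filter (fun c => P R S i c) :=
      Finset.mem_filter.mpr ⟨Finset.mem_range.mpr hcn, hp⟩
    rw [heq, Finset.mem_range] at this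
    exact this
  · intro hc
    have : c ∈ (Finset.range n).filter (fun c => P R S i c) := by
      rw [heq, Finset.mem_range]
      exact hc
    exact (Finset.mem_filter.mp this).2

lemma recon_le (i : ℕ) : recon n R S i ≤ n := by
  have := Finset.card_filter_le (Finset.range n) (fun c => P R S i c)
  simpa [recon] using this

lemma recon_key (h : Cond n R S) (i k : ℕ) :
    k + i + 1 ≤ recon n R S i ↔ i + 1 ≤ R k := by
  constructor
  · intro hk
    have : P R S i (k + i) := (recon_mem h i (k + i)).mpr (by omega)
    unfold P at this
    rw [if_pos (by omega), show k + i - i = k by omega] at this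
    exact this
  · intro hR
    have hn : k + i + 1 ≤ n := by
      have h1 := h.dom k
      rcases h.s_bound (k + 1) with h' | h' <;> omega
    have : P R S i (k + i) := by
      unfold P
      rw [if_pos (by omega), show k + i - i = k by omega]
      exact hR
    have := (recon_mem h i (k + i)).mp this
    omega

lemma recon_lt (h : Cond n R S) (i : ℕ) (hi : i < n) : recon n R S i < n := by
  rcases Nat.lt_or_ge (recon n R S i) n with h' | h'
  · exact h'
  · exfalso
    have hrn : recon n R S i = n := le_antisymm (recon_le i) h'
    have : (n - 1 - i) + i + 1 ≤ recon n R S i := by omega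
    have hR := (recon_key h i (n - 1 - i)).mp this
    have h1 := h.dom (n - 1 - i)
    rcases h.s_bound (n - 1 - i + 1) with h2 | h2 <;> omega

lemma recon_anti (h : Cond n R S) {i j : ℕ} (hij : i ≤ j) :
    recon n R S j ≤ recon n R S i := by
  apply Finset.card_le_card
  intro c hc
  rw [Finset.mem_filter] at hc ⊢
  exact ⟨hc.1, P_col h c hij hc.2⟩


/-! ### the reconstructed function -/

def gfun (h : Cond n R S) : Fin n → Fin n :=
  fun i => ⟨recon n R S (i : ℕ), recon_lt h (i : ℕ) i.isLt⟩

lemma gfun_mono (h : Cond n R S) : ∀ i j : Fin n, i ≤ j → gfun h j ≤ gfun h i := by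
  intro i j hij
  simp only [gfun, Fin.mk_le_mk, Fin.le_def]
  exact recon_anti h (by exact_mod_cast hij)

lemma card_val_lt (m : ℕ) (hm : m ≤ n) :
    #(Finset.univ.filter fun i : Fin n => (i : ℕ) < m) = m := by
  have hlt : ∀ a ∈ Finset.range m, a < n := fun a ha => by
    rw [Finset.mem_range] at ha; omega
  have : (Finset.univ.filter fun i : Fin n => (i : ℕ) < m) =
      (Finset.range m).attachFin hlt := by
    ext i
    rw [Finset.mem_filter, Finset.mem_attachFin, Finset.mem_range]
    simp
  rw [this, Finset.card_attachFin, Finset.card_range]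

lemma rr_gfun (h : Cond n R S) (k : ℕ) : rr n (gfun h) k = R k := by
  unfold rr
  have heq : (Finset.univ.filter fun i : Fin n => k + (i : ℕ) + 1 ≤ ((gfun h i) : ℕ)) =
      Finset.univ.filter fun i : Fin n => (i : ℕ) < R k := by
    apply Finset.filter_congr
    intro i _
    have := recon_key h (i : ℕ) k
    simp only [gfun]
    omega
  rw [heq, card_val_lt _ (h.r_le k)]

lemma cc_gfun_mem (h : Cond n R S) (c : ℕ) (i : Fin n) :
    (i : ℕ) < cc n (gfun h) c ↔ P R S (i : ℕ) c := by
  have heq : (Finset.univ.filter fun i : Fin n => c + 1 ≤ ((gfun h i) : ℕ)) =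
      Finset.univ.filter fun i : Fin n => P R S (i : ℕ) c := by
    apply Finset.filter_congr
    intro i _
    have := recon_mem h (i : ℕ) c
    simp only [gfun]
    constructor
    · intro hh; exact this.mpr (by omega)
    · intro hh; have := this.mp hh; omega
  unfold cc
  rw [heq, ← fin_down]
  · rw [Finset.mem_filter]
    simp
  · intro a b hab hb
    rw [Finset.mem_filter] at hb ⊢
    exact ⟨Finset.mem_univ _, P_col h c (by exact_mod_cast hab) hb.2⟩

lemma ss_gfun (h : Cond n R S) (k : ℕ) : ss n (gfun h) k = S k := by
  rcases Nat.eq_zero_or_pos k with rfl | hk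
  · rw [← rr_zero_eq_ss_zero (gfun_mono h), rr_gfun h 0, h.zero]
  · unfold ss
    have heq : (Finset.univ.filter fun j : Fin n => k + (j : ℕ) + 1 ≤ cc n (gfun h) (j : ℕ)) =
        Finset.univ.filter fun j : Fin n => (j : ℕ) < S k := by
      apply Finset.filter_congr
      intro j _
      constructor
      · intro hj
        have hcc : k + (j : ℕ) < cc n (gfun h) (j : ℕ) := by omega
        have hn : k + (j : ℕ) < n := lt_of_lt_of_le hcc (cc_le _)
        have hP := (cc_gfun_mem h (j : ℕ) ⟨k + (j : ℕ), hn⟩).mp (by simpa using hcc)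
        simp only [Fin.val_mk] at hP
        unfold P at hP
        rw [if_neg (by omega), show k + (j : ℕ) - (j : ℕ) = k by omega] at hP
        omega
      · intro hj
        have hSb : S k + k ≤ n := by
          rcases h.s_bound k with h' | h' <;> omega
        have hn : k + (j : ℕ) < n := by omega
        have hP : P R S ((⟨k + (j : ℕ), hn⟩ : Fin n) : ℕ) (j : ℕ) := by
          unfold P
          rw [if_neg (by simp; omega)]
          simp only [Fin.val_mk]
          rw [show k + (j : ℕ) - (j : ℕ) = k by omega]
          omega
        have := (cc_gfun_mem h (j : ℕ) ⟨k + (j : ℕ), hn⟩).mpr hP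
        simp only [Fin.val_mk] at this
        omega
    rw [heq, card_val_lt _ (h.s_le k)]

/-! ### the first equivalence -/

def OK (n : ℕ) (f : Fin n → Fin n) : Prop :=
  (∀ i j : Fin n, i ≤ j → f j ≤ f i) ∧
    (∀ i : Fin n, (i : ℕ) + 1 ≤ (f i : ℕ) →
      (f i : ℕ) <
        ((Finset.univ : Finset (Fin n)).filter
          (fun j => (i : ℕ) + 1 ≤ (f j : ℕ))).card)

lemma ok_balanced {f : Fin n → Fin n} (hok : OK n f) :
    ∀ i : Fin n, (i : ℕ) + 1 ≤ (f i : ℕ) → (f i : ℕ) < cc n f (i : ℕ) :=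
  hok.2

def equivT (n : ℕ) : {f : Fin n → Fin n // OK n f} ≃
    {p : (ℕ → ℕ) × (ℕ → ℕ) // Cond n p.1 p.2} where
  toFun := fun x => ⟨(rr n x.1, ss n x.1),
    { zero := rr_zero_eq_ss_zero x.2.1
      rant := fun k => rr_anti k
      rstep := fun k => rr_step x.2.1 k
      sant := fun k => ss_anti k
      sstep := fun k => ss_step x.2.1 k
      rvan := fun k hk => rr_van k hk
      svan := fun k hk => ss_van k hk
      dom := (cond_iff x.2.1).mp (ok_balanced x.2) }⟩
  invFun := fun p => ⟨gfun p.2,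
    ⟨gfun_mono p.2, by
      have hdom : ∀ k, rr n (gfun p.2) k ≤ ss n (gfun p.2) (k + 1) := by
        intro k
        rw [rr_gfun p.2 k, ss_gfun p.2 (k + 1)]
        exact p.2.dom k
      exact (cond_iff (gfun_mono p.2)).mpr hdom⟩⟩
  left_inv := by
    rintro ⟨f, hf, hb⟩
    apply Subtype.ext
    funext i
    apply Fin.ext
    show recon n (rr n f) (ss n f) (i : ℕ) = (f i : ℕ)
    unfold recon
    have heq : ((Finset.range n).filter fun c => P (rr n f) (ss n f) (i : ℕ) c) =
        (Finset.range n).filter fun c => c + 1 ≤ (f i : ℕ) := by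
      apply Finset.filter_congr
      intro c hc
      rw [Finset.mem_range] at hc
      unfold P
      rcases le_or_gt (i : ℕ) c with hic | hic
      · rw [if_pos hic]
        have := mem_rr hf i (c - (i : ℕ))
        rw [show c - (i : ℕ) + (i : ℕ) + 1 = c + 1 by omega] at this
        omega
      · rw [if_neg (by omega)]
        have h1 := mem_ss hf ⟨c, hc⟩ ((i : ℕ) - c)
        simp only [Fin.val_mk] at h1
        rw [show (i : ℕ) - c + c + 1 = (i : ℕ) + 1 by omega] at h1
        have h2 := mem_cc hf i c
        omega
    rw [heq]
    have : ((Finset.range n).filter fun c => c + 1 ≤ (f i : ℕ)) =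
        Finset.range (f i : ℕ) := by
      ext c
      rw [Finset.mem_filter, Finset.mem_range, Finset.mem_range]
      have := (f i).isLt
      omega
    rw [this, Finset.card_range]
  right_inv := by
    rintro ⟨⟨R, S⟩, h⟩
    apply Subtype.ext
    show (rr n (gfun h), ss n (gfun h)) = (R, S)
    ext k
    · exact rr_gfun h k
    · exact ss_gfun h k


/-! ### words -/

def wrd (R S : ℕ → ℕ) : ℕ → List DyckStep
  | 0 => []
  | m + 1 => wrd R S m ++ [if S (m + 1) < S m then D else U, if R (m + 1) < R m then U else D]

lemma wrd_length (R S : ℕ → ℕ) (m : ℕ) : (wrd R S m).length = 2 * m := by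
  induction m with
  | zero => rfl
  | succ t ih => simp [wrd, ih]; omega

lemma wrd_count (h : Cond n R S) (m : ℕ) :
    (wrd R S m).count U + S 0 + R m = m + S m + R 0 ∧
      (wrd R S m).count D + R 0 + S m = m + R m + S 0 := by
  induction m with
  | zero => simp [wrd]
  | succ t ih =>
    obtain ⟨ih1, ih2⟩ := ih
    have hs1 := h.sant t
    have hs2 := h.sstep t
    have hr1 := h.rant t
    have hr2 := h.rstep t
    simp only [wrd, List.count_append, List.count_cons, List.count_nil]
    split_ifs with h1 h2 h2 <;> simp_all <;> omega

lemma wrd_diff (h : Cond n R S) (m : ℕ) :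
    (wrd R S m).count D + S m ≤ (wrd R S m).count U + R m := by
  obtain ⟨h1, h2⟩ := wrd_count h m
  have h3 := h.zero
  have h4 : R m ≤ S m := le_trans (h.dom m) (h.sant m)
  omega

lemma wrd_take_prefix (h : Cond n R S) (m : ℕ) :
    ∀ t, ((wrd R S m).take t).count D ≤ ((wrd R S m).take t).count U := by
  induction m with
  | zero => intro t; simp [wrd]
  | succ q ih =>
    intro t
    rcases Nat.lt_or_ge t (2 * q + 1) with ht | ht
    · rw [show wrd R S (q + 1) = wrd R S q ++
          [if S (q + 1) < S q then D else U, if R (q + 1) < R q then U else D] from rfl,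
        List.take_append_of_le_length (by rw [wrd_length]; omega)]
      exact ih t
    rcases Nat.lt_or_ge t (2 * q + 2) with ht2 | ht2
    · -- t = 2q + 1
      have htt : t = 2 * q + 1 := by omega
      subst htt
      rw [show wrd R S (q + 1) = wrd R S q ++
          [if S (q + 1) < S q then D else U, if R (q + 1) < R q then U else D] from rfl]
      rw [show (2 * q + 1) = (wrd R S q).length + 1 by rw [wrd_length]]
      rw [List.take_length_add_append]
      have hd := wrd_diff h q
      have h1 := h.dom q
      have h2 := h.sant q
      have h3 := h.sstep q
      simp only [List.count_append]
      split_ifs with hsq <;> simp <;> omega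
    · rw [List.take_of_length_le (by rw [wrd_length]; omega)]
      have hd := wrd_diff h (q + 1)
      have h1 : R (q + 1) ≤ S (q + 1) := le_trans (h.dom (q + 1)) (h.sant (q + 1))
      omega

def toWord (h : Cond n R S) : DyckWord where
  toList := wrd R S n
  count_U_eq_count_D := by
    obtain ⟨h1, h2⟩ := wrd_count h n
    have h3 := h.zero
    have h4 := h.rvan n le_rfl
    have h5 := h.svan n le_rfl
    omega
  count_D_le_count_U := fun i => wrd_take_prefix h n i

lemma toWord_semilength (h : Cond n R S) : (toWord h).semilength = n := by
  show (wrd R S n).count U = n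
  obtain ⟨h1, h2⟩ := wrd_count h n
  have h3 := h.rvan n le_rfl
  have h4 := h.svan n le_rfl
  have h5 := h.zero
  omega

/-! ### from words to profiles -/

def rof (n : ℕ) (l : List DyckStep) (k : ℕ) : ℕ :=
  #((Finset.Ico k n).filter fun j => l.getD (2 * j + 1) U = U)

def sof (n : ℕ) (l : List DyckStep) (k : ℕ) : ℕ :=
  #((Finset.Ico k n).filter fun j => l.getD (2 * j) U = D)

lemma rof_van (l : List DyckStep) (k : ℕ) (hk : n ≤ k) : rof n l k = 0 := by
  rw [rof, Finset.Ico_eq_empty (by omega), Finset.filter_empty, Finset.card_empty]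

lemma sof_van (l : List DyckStep) (k : ℕ) (hk : n ≤ k) : sof n l k = 0 := by
  rw [sof, Finset.Ico_eq_empty (by omega), Finset.filter_empty, Finset.card_empty]

lemma rof_succ (l : List DyckStep) (k : ℕ) (hk : k < n) :
    rof n l k = rof n l (k + 1) + (if l.getD (2 * k + 1) U = U then 1 else 0) := by
  unfold rof
  rw [← Finset.insert_Ico_add_one_left_eq_Ico hk, Finset.filter_insert]
  split_ifs with h1
  · rw [Finset.card_insert_of_notMem (by simp)]
  · simp

lemma sof_succ (l : List DyckStep) (k : ℕ) (hk : k < n) :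
    sof n l k = sof n l (k + 1) + (if l.getD (2 * k) U = D then 1 else 0) := by
  unfold sof
  rw [← Finset.insert_Ico_add_one_left_eq_Ico hk, Finset.filter_insert]
  split_ifs with h1
  · rw [Finset.card_insert_of_notMem (by simp)]
  · simp

lemma wrd_getD_even (R S : ℕ → ℕ) (m j : ℕ) (hj : j < m) :
    (wrd R S m).getD (2 * j) U = (if S (j + 1) < S j then D else U) := by
  induction m with
  | zero => omega
  | succ t ih =>
    rcases Nat.lt_or_ge j t with h' | h'
    · rw [show wrd R S (t + 1) = wrd R S t ++ _ from rfl,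
        List.getD_append _ _ _ _ (by rw [wrd_length]; omega)]
      exact ih h'
    · have : j = t := by omega
      subst this
      rw [show wrd R S (j + 1) = wrd R S j ++ _ from rfl,
        List.getD_append_right _ _ _ _ (by rw [wrd_length])]
      rw [wrd_length, show 2 * j - 2 * j = 0 by omega]
      rfl

lemma wrd_getD_odd (R S : ℕ → ℕ) (m j : ℕ) (hj : j < m) :
    (wrd R S m).getD (2 * j + 1) U = (if R (j + 1) < R j then U else D) := by
  induction m with
  | zero => omega
  | succ t ih =>
    rcases Nat.lt_or_ge j t with h' | h'
    · rw [show wrd R S (t + 1) = wrd R S t ++ _ from rfl,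
        List.getD_append _ _ _ _ (by rw [wrd_length]; omega)]
      exact ih h'
    · have : j = t := by omega
      subst this
      rw [show wrd R S (j + 1) = wrd R S j ++ _ from rfl,
        List.getD_append_right _ _ _ _ (by rw [wrd_length]; omega)]
      rw [wrd_length, show 2 * j + 1 - 2 * j = 1 by omega]
      rfl


lemma rof_wrd (h : Cond n R S) : ∀ k, rof n (wrd R S n) k = R k := by
  suffices hh : ∀ d k, n - k = d → rof n (wrd R S n) k = R k by
    intro k; exact hh (n - k) k rfl
  intro d
  induction d with
  | zero =>
    intro k hk
    rw [rof_van _ k (by omega), h.rvan k (by omega)]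
  | succ e ih =>
    intro k hk
    have hkn : k < n := by omega
    rw [rof_succ _ k hkn, ih (k + 1) (by omega), wrd_getD_odd R S n k hkn]
    have h1 := h.rant k
    have h2 := h.rstep k
    split_ifs <;> simp_all <;> omega

lemma sof_wrd (h : Cond n R S) : ∀ k, sof n (wrd R S n) k = S k := by
  suffices hh : ∀ d k, n - k = d → sof n (wrd R S n) k = S k by
    intro k; exact hh (n - k) k rfl
  intro d
  induction d with
  | zero =>
    intro k hk
    rw [sof_van _ k (by omega), h.svan k (by omega)]
  | succ e ih =>
    intro k hk
    have hkn : k < n := by omega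
    rw [sof_succ _ k hkn, ih (k + 1) (by omega), wrd_getD_even R S n k hkn]
    have h1 := h.sant k
    have h2 := h.sstep k
    split_ifs <;> simp_all <;> omega


lemma rof_anti (l : List DyckStep) (k : ℕ) : rof n l (k + 1) ≤ rof n l k := by
  rcases Nat.lt_or_ge k n with hk | hk
  · rw [rof_succ l k hk]; omega
  · rw [rof_van l k hk, rof_van l (k + 1) (by omega)]

lemma rof_step (l : List DyckStep) (k : ℕ) : rof n l k ≤ rof n l (k + 1) + 1 := by
  rcases Nat.lt_or_ge k n with hk | hk
  · rw [rof_succ l k hk]; split_ifs <;> omega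
  · rw [rof_van l k hk]; omega

lemma sof_anti (l : List DyckStep) (k : ℕ) : sof n l (k + 1) ≤ sof n l k := by
  rcases Nat.lt_or_ge k n with hk | hk
  · rw [sof_succ l k hk]; omega
  · rw [sof_van l k hk, sof_van l (k + 1) (by omega)]

lemma sof_step (l : List DyckStep) (k : ℕ) : sof n l k ≤ sof n l (k + 1) + 1 := by
  rcases Nat.lt_or_ge k n with hk | hk
  · rw [sof_succ l k hk]; split_ifs <;> omega
  · rw [sof_van l k hk]; omega

lemma take_counts (l : List DyckStep) (hlen : l.length = 2 * n) (k : ℕ) (hk : k ≤ n) :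
    (l.take (2 * k)).count U + sof n l 0 + rof n l k = k + sof n l k + rof n l 0 ∧
      (l.take (2 * k)).count D + rof n l 0 + sof n l k = k + rof n l k + sof n l 0 := by
  induction k with
  | zero => simp
  | succ t ih =>
    have ht : t < n := by omega
    obtain ⟨ih1, ih2⟩ := ih (by omega)
    have hb1 : 2 * t < l.length := by omega
    have hb2 : 2 * t + 1 < l.length := by omega
    have e1 := List.take_concat_get hb1
    have e2 := List.take_concat_get hb2
    have hget1 : l.getD (2 * t) U = l[2 * t] := List.getD_eq_getElem l U hb1
    have hget2 : l.getD (2 * t + 1) U = l[2 * t + 1] := List.getD_eq_getElem l U hb2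
    have hs := sof_succ (n := n) l t ht
    have hr := rof_succ (n := n) l t ht
    rw [show 2 * (t + 1) = (2 * t + 1) + 1 by omega, ← e2, ← e1]
    simp only [List.concat_eq_append, List.count_append, List.count_cons, List.count_nil]
    rw [hget1] at hs
    rw [hget2] at hr
    rcases DyckStep.dichotomy (l[2 * t]'hb1) with h1 | h1 <;>
      rcases DyckStep.dichotomy (l[2 * t + 1]'hb2) with h2 | h2 <;>
      rw [h1] at hs ⊢ <;> rw [h2] at hr ⊢ <;> simp_all <;> omega

lemma dyck_zero (l : List DyckStep) (hlen : l.length = 2 * n)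
    (hbal : l.count U = l.count D) : rof n l 0 = sof n l 0 := by
  obtain ⟨h1, h2⟩ := take_counts l hlen n le_rfl
  rw [List.take_of_length_le (by omega)] at h1 h2
  rw [rof_van l n le_rfl, sof_van l n le_rfl] at h1 h2
  omega

lemma dyck_dom (l : List DyckStep) (hlen : l.length = 2 * n)
    (hzero : rof n l 0 = sof n l 0)
    (hpre : ∀ i, (l.take i).count D ≤ (l.take i).count U) (k : ℕ) :
    rof n l k ≤ sof n l (k + 1) := by
  rcases Nat.lt_or_ge k n with hk | hk
  · obtain ⟨h1, h2⟩ := take_counts l hlen k (by omega)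
    have hb1 : 2 * k < l.length := by omega
    have hs := sof_succ (n := n) l k hk
    have hget1 : l.getD (2 * k) U = l[2 * k] := List.getD_eq_getElem l U hb1
    rw [hget1] at hs
    have e1 := List.take_concat_get hb1
    rcases DyckStep.dichotomy (l[2 * k]'hb1) with hU | hD
    · rw [hU, if_neg (by decide)] at hs
      have := hpre (2 * k)
      omega
    · rw [hD, if_pos rfl] at hs
      have hpre1 := hpre (2 * k + 1)
      have c1 : (l.take (2 * k + 1)).count D = (l.take (2 * k)).count D + 1 := by
        rw [← e1, List.concat_eq_append, List.count_append, hD]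
        simp
      have c2 : (l.take (2 * k + 1)).count U = (l.take (2 * k)).count U := by
        rw [← e1, List.concat_eq_append, List.count_append, hD]
        simp
      rw [c1, c2] at hpre1
      omega
  · rw [rof_van l k hk]; omega

def equivW (n : ℕ) : {p : (ℕ → ℕ) × (ℕ → ℕ) // Cond n p.1 p.2} ≃
    {p : DyckWord // p.semilength = n} where
  toFun := fun x => ⟨toWord x.2, toWord_semilength x.2⟩
  invFun := fun q => ⟨(rof n q.1.toList, sof n q.1.toList),
    { zero := dyck_zero q.1.toList
        (by rw [← DyckWord.two_mul_semilength_eq_length, q.2]) q.1.count_U_eq_count_D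
      rant := fun k => rof_anti q.1.toList k
      rstep := fun k => rof_step q.1.toList k
      sant := fun k => sof_anti q.1.toList k
      sstep := fun k => sof_step q.1.toList k
      rvan := fun k hk => rof_van q.1.toList k hk
      svan := fun k hk => sof_van q.1.toList k hk
      dom := dyck_dom q.1.toList
        (by rw [← DyckWord.two_mul_semilength_eq_length, q.2])
        (dyck_zero q.1.toList
          (by rw [← DyckWord.two_mul_semilength_eq_length, q.2]) q.1.count_U_eq_count_D)
        q.1.count_D_le_count_U }⟩
  left_inv := by
    rintro ⟨⟨R, S⟩, h⟩
    apply Subtype.ext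
    show (rof n (wrd R S n) , sof n (wrd R S n)) = (R, S)
    ext k
    · exact rof_wrd h k
    · exact sof_wrd h k
  right_inv := by
    rintro ⟨q, hq⟩
    apply Subtype.ext
    apply DyckWord.ext
    show wrd (rof n q.toList) (sof n q.toList) n = q.toList
    have hlen : q.toList.length = 2 * n := by
      rw [← DyckWord.two_mul_semilength_eq_length, hq]
    apply List.ext_getElem (by rw [wrd_length, hlen])
    intro i hi1 hi2
    rw [wrd_length] at hi1
    have hj : i / 2 < n := by omega
    have hgetw : (wrd (rof n q.toList) (sof n q.toList) n)[i] =
        (wrd (rof n q.toList) (sof n q.toList) n).getD i U :=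
      (List.getD_eq_getElem _ U (by rw [wrd_length]; omega)).symm
    have hgetq : q.toList[i] = q.toList.getD i U :=
      (List.getD_eq_getElem _ U (by omega)).symm
    rw [hgetw, hgetq]
    rcases Nat.even_or_odd i with ⟨j, hij⟩ | ⟨j, hij⟩
    · have hjn : j < n := by omega
      rw [show i = 2 * j by omega]
      rw [wrd_getD_even _ _ n j hjn]
      have hs := sof_succ (n := n) q.toList j hjn
      rcases DyckStep.dichotomy (q.toList.getD (2 * j) U) with hU | hD
      · rw [hU] at hs ⊢
        rw [if_neg (by decide)] at hs
        rw [if_neg (by omega)]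
      · rw [hD] at hs ⊢
        rw [if_pos rfl] at hs
        rw [if_pos (by omega)]
    · have hjn : j < n := by omega
      rw [show i = 2 * j + 1 by omega]
      rw [wrd_getD_odd _ _ n j hjn]
      have hr := rof_succ (n := n) q.toList j hjn
      rcases DyckStep.dichotomy (q.toList.getD (2 * j + 1) U) with hU | hD
      · rw [hU] at hr ⊢
        rw [if_pos rfl] at hr
        rw [if_pos (by omega)]
      · rw [hD] at hr ⊢
        rw [if_neg (by decide)] at hr
        rw [if_neg (by omega)]

end MBP

/-- Modified balanced partitions of size `n` (partitions with at most `n` parts, each part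
at most `n-1`, here encoded as weakly decreasing functions `Fin n → Fin n`, such that
`λ_i < λ'_i` whenever `λ_i ≥ i`) are counted by the `n`-th Catalan number. -/
theorem stmt_5 (n : ℕ) :
    Nat.card {f : Fin n → Fin n //
        (∀ i j : Fin n, i ≤ j → f j ≤ f i) ∧
        (∀ i : Fin n, (i : ℕ) + 1 ≤ (f i : ℕ) →
          (f i : ℕ) <
            ((Finset.univ : Finset (Fin n)).filter
              (fun j => (i : ℕ) + 1 ≤ (f j : ℕ))).card)} = catalan n := by
  have e : {f : Fin n → Fin n //
      (∀ i j : Fin n, i ≤ j → f j ≤ f i) ∧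
      (∀ i : Fin n, (i : ℕ) + 1 ≤ (f i : ℕ) →
        (f i : ℕ) <
          ((Finset.univ : Finset (Fin n)).filter
            (fun j => (i : ℕ) + 1 ≤ (f j : ℕ))).card)} ≃
      {p : DyckWord // p.semilength = n} := (MBP.equivT n).trans (MBP.equivW n)
  rw [Nat.card_congr e, Nat.card_eq_fintype_card,
    DyckWord.card_dyckWord_semilength_eq_catalan]
end

section
/- The map sending a non-empty modified balanced partition of size n with Frobenius notation (a_1,…,a_l | b_1,…,b_l) to the lattice path N^{b_l} E^{a_l+1} N^{b_{l−1}−b_l} E^{a_{l−1}−a_l} ⋯ N^{b_1−b_2} E^{a_1−a_2} N^{n−b_1} E^{n−a_1−1} (and sending the empty partition to N^n E^n) is a bijection from modified balanced partitions of size n to Dyck paths from (0,0) to (n,n), i.e. lattice paths with n north steps and n east steps that stay weakly above the diagonal. -/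
/-- A modified balanced partition of size `n`, given in Frobenius notation
`(a_1,…,a_l | b_1,…,b_l)`: strictly decreasing non-negative arm lengths `a` and leg
lengths `b` with `a_i < b_i` (the defining condition), at most `n` parts (`b_1 + 1 ≤ n`,
i.e. `b i + 1 ≤ n`) and largest part at most `n − 1` (`a_1 + 1 ≤ n − 1`, i.e.
`a i + 2 ≤ n`).  The empty partition corresponds to `l = 0`. -/
structure ModBalanced (n : ℕ) where
  l : ℕ
  a : Fin l → ℕ
  b : Fin l → ℕ
  ha : StrictAnti a
  hb : StrictAnti b
  hab : ∀ i, a i < b i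
  hbn : ∀ i, b i + 1 ≤ n
  han : ∀ i, a i + 2 ≤ n

/-- The extended arm sequence: `ea 0 = n`, `ea i = a_i + 1` for `1 ≤ i ≤ l`, `ea i = 0`
for `i > l`. -/
def eA {n : ℕ} (m : ModBalanced n) : ℕ → ℕ := fun i =>
  if h0 : i = 0 then n else if h : i ≤ m.l then m.a ⟨i - 1, by omega⟩ + 1 else 0

/-- The extended leg sequence: `eb 0 = n`, `eb i = b_i` for `1 ≤ i ≤ l`, `eb i = 0`
for `i > l`. -/
def eB {n : ℕ} (m : ModBalanced n) : ℕ → ℕ := fun i =>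
  if h0 : i = 0 then n else if h : i ≤ m.l then m.b ⟨i - 1, by omega⟩ else 0

/-- The lattice path `N^{b_l} E^{a_l+1} N^{b_{l−1}−b_l} E^{a_{l−1}−a_l} ⋯
N^{b_1−b_2} E^{a_1−a_2} N^{n−b_1} E^{n−a_1−1}` (with `N` = `true`, `E` = `false`);
for the empty partition it is `N^n E^n`. -/
def toPath {n : ℕ} (m : ModBalanced n) : List Bool :=
  ((List.range (m.l + 1)).reverse).flatMap (fun i =>
    List.replicate (eB m i - eB m (i + 1)) true ++
      List.replicate (eA m i - eA m (i + 1)) false)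

/-- Dyck paths from `(0,0)` to `(n,n)`: `n` north and `n` east steps, every prefix having
at least as many north steps as east steps (weakly above the diagonal). -/
def IsDyck (n : ℕ) (p : List Bool) : Prop :=
  p.length = 2 * n ∧ p.count true = n ∧
  ∀ k, ((p.take k).count false) ≤ (p.take k).count true


namespace StmtAux

def blk (q : ℕ × ℕ) : List Bool := List.replicate q.1 true ++ List.replicate q.2 false

def blocks (L : List (ℕ × ℕ)) : List Bool := L.flatMap blk

def Pos (L : List (ℕ × ℕ)) : Prop := ∀ q ∈ L, 0 < q.1 ∧ 0 < q.2

lemma blocks_nil : blocks ([] : List (ℕ × ℕ)) = [] := rfl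

lemma blocks_cons (q : ℕ × ℕ) (L : List (ℕ × ℕ)) :
    blocks (q :: L) = List.replicate q.1 true ++ (List.replicate q.2 false ++ blocks L) := by
  simp [blocks, blk]

lemma count_true_blocks (L : List (ℕ × ℕ)) :
    (blocks L).count true = (L.map Prod.fst).sum := by
  induction L with
  | nil => rfl
  | cons q t ih => simp [blocks_cons, List.count_append, List.count_replicate, ih]

lemma count_false_blocks (L : List (ℕ × ℕ)) :
    (blocks L).count false = (L.map Prod.snd).sum := by
  induction L with
  | nil => rfl
  | cons q t ih => simp [blocks_cons, List.count_append, List.count_replicate, ih]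

lemma count_bool (p : List Bool) : p.count true + p.count false = p.length := by
  induction p with
  | nil => rfl
  | cons b t ih => cases b <;> simp [List.count_cons, ih] <;> omega

def headOk (s : List Bool) : Prop := s = [] ∨ s.head? = some true

lemma rep_true_eq : ∀ {c1 c2 : ℕ} {x1 x2 : List Bool},
    List.replicate c1 true ++ false :: x1 = List.replicate c2 true ++ false :: x2 →
    c1 = c2 ∧ x1 = x2 := by
  intro c1
  induction c1 with
  | zero =>
    intro c2 x1 x2 h
    cases c2 with
    | zero => simpa using h
    | succ c => simp [List.replicate_succ] at h
  | succ c ih =>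
    intro c2 x1 x2 h
    cases c2 with
    | zero => simp [List.replicate_succ] at h
    | succ c' =>
      simp only [List.replicate_succ, List.cons_append, List.cons.injEq, true_and] at h
      obtain ⟨h1, h2⟩ := ih h
      exact ⟨by omega, h2⟩

lemma not_headOk {y : List Bool} (h : headOk y) (d : ℕ) (x : List Bool) :
    y ≠ false :: x := by
  rintro rfl
  rcases h with h | h <;> simp at h

lemma rep_false_eq : ∀ {d1 d2 : ℕ} {y1 y2 : List Bool}, headOk y1 → headOk y2 →
    List.replicate d1 false ++ y1 = List.replicate d2 false ++ y2 →
    d1 = d2 ∧ y1 = y2 := by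
  intro d1
  induction d1 with
  | zero =>
    intro d2 y1 y2 h1 h2 h
    cases d2 with
    | zero => simpa using h
    | succ d =>
      exfalso
      simp only [List.replicate_succ, List.nil_append, List.cons_append] at h
      exact not_headOk h1 d _ h
  | succ d ih =>
    intro d2 y1 y2 h1 h2 h
    cases d2 with
    | zero =>
      exfalso
      simp only [List.replicate_succ, List.nil_append, List.cons_append] at h
      exact not_headOk h2 d _ h.symm
    | succ d' =>
      simp only [List.replicate_succ, List.cons_append, List.cons.injEq, true_and] at h
      obtain ⟨hh1, hh2⟩ := ih h1 h2 h
      exact ⟨by omega, hh2⟩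

lemma headOk_blocks {L : List (ℕ × ℕ)} (hL : Pos L) : headOk (blocks L) := by
  cases L with
  | nil => exact Or.inl rfl
  | cons q t =>
    right
    have hq := (hL q (by simp)).1
    rw [blocks_cons]
    obtain ⟨c, hc⟩ : ∃ c, q.1 = c + 1 := ⟨q.1 - 1, by omega⟩
    rw [hc]
    simp [List.replicate_succ]

lemma blocks_injOn : ∀ {L1 L2 : List (ℕ × ℕ)}, Pos L1 → Pos L2 →
    blocks L1 = blocks L2 → L1 = L2 := by
  intro L1
  induction L1 with
  | nil =>
    intro L2 _ h2 h
    cases L2 with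
    | nil => rfl
    | cons q t =>
      exfalso
      have hq := (h2 q (by simp)).1
      rw [blocks_cons] at h
      obtain ⟨c, hc⟩ : ∃ c, q.1 = c + 1 := ⟨q.1 - 1, by omega⟩
      rw [hc] at h
      simp [List.replicate_succ, blocks] at h
  | cons q1 t1 ih =>
    intro L2 h1 h2 h
    cases L2 with
    | nil =>
      exfalso
      have hq := (h1 q1 (by simp)).1
      rw [blocks_cons] at h
      obtain ⟨c, hc⟩ : ∃ c, q1.1 = c + 1 := ⟨q1.1 - 1, by omega⟩
      rw [hc] at h
      simp [List.replicate_succ, blocks] at h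
    | cons q2 t2 =>
      have hq1 := h1 q1 (by simp)
      have hq2 := h2 q2 (by simp)
      have ht1 : Pos t1 := fun q hq => h1 q (by simp [hq])
      have ht2 : Pos t2 := fun q hq => h2 q (by simp [hq])
      rw [blocks_cons, blocks_cons] at h
      obtain ⟨d1, hd1⟩ : ∃ d, q1.2 = d + 1 := ⟨q1.2 - 1, by omega⟩
      obtain ⟨d2, hd2⟩ : ∃ d, q2.2 = d + 1 := ⟨q2.2 - 1, by omega⟩
      rw [hd1, hd2] at h
      simp only [List.replicate_succ, List.cons_append] at h
      obtain ⟨hc, h⟩ := rep_true_eq h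
      obtain ⟨hd, h⟩ := rep_false_eq (headOk_blocks ht1) (headOk_blocks ht2) h
      have : t1 = t2 := ih ht1 ht2 h
      subst this
      have : q1 = q2 := Prod.ext hc (by omega)
      rw [this]

lemma span_run (x : Bool) : ∀ p : List Bool, ∃ c t, p = List.replicate c x ++ t ∧
    t.head? ≠ some x ∧ (p.head? = some x → 0 < c) := by
  intro p
  induction p with
  | nil => exact ⟨0, [], rfl, by simp, by simp⟩
  | cons bb p ih =>
    by_cases hb : bb = x
    · obtain ⟨c, t, hpt, hhd, _⟩ := ih
      exact ⟨c + 1, t, by rw [List.replicate_succ]; simp [hb, ← hpt], hhd,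
        fun _ => Nat.succ_pos c⟩
    · refine ⟨0, bb :: p, rfl, ?_, ?_⟩
      · simp [hb]
      · simp [hb]

lemma exists_blocks_aux : ∀ (N : ℕ) (p : List Bool), p.length ≤ N →
    (p.head? = some true ∨ p = []) → (p.getLast? = some false ∨ p = []) →
    ∃ L, Pos L ∧ blocks L = p := by
  intro N
  induction N with
  | zero =>
    intro p hlen _ _
    have : p = [] := by
      cases p with
      | nil => rfl
      | cons a t => simp at hlen
    exact ⟨[], by simp [Pos], by simp [this, blocks]⟩
  | succ N ih =>
    intro p hlen hh hl
    rcases eq_or_ne p [] with rfl | hne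
    · exact ⟨[], by simp [Pos], by simp [blocks]⟩
    have hh' : p.head? = some true := by
      rcases hh with h | h
      · exact h
      · exact absurd h hne
    obtain ⟨c, t, hpt, hth, hc⟩ := span_run true p
    have hc' : 0 < c := hc hh'
    have htne : t ≠ [] := by
      rintro rfl
      obtain ⟨c', rfl⟩ : ∃ c', c = c' + 1 := ⟨c - 1, by omega⟩
      rcases hl with h | h
      · rw [hpt] at h
        rw [List.replicate_succ' ] at h
        simp at h
      · exact hne h
    have hth' : t.head? = some false := by
      cases t with
      | nil => exact absurd rfl htne
      | cons b u =>
        cases b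
        · rfl
        · simp at hth
    obtain ⟨d, u, htu, huh, hd⟩ := span_run false t
    have hd' : 0 < d := hd hth'
    have huh' : u.head? = some true ∨ u = [] := by
      cases u with
      | nil => exact Or.inr rfl
      | cons b v =>
        cases b
        · simp at huh
        · exact Or.inl rfl
    have hul : u.getLast? = some false ∨ u = [] := by
      cases u with
      | nil => exact Or.inr rfl
      | cons b v =>
        left
        rcases hl with h | h
        · rw [hpt, htu] at h
          rw [List.getLast?_append, List.getLast?_append] at h
          simpa using h
        · exact absurd h hne
    have hulen : u.length ≤ N := by
      have : p.length = c + d + u.length := by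
        rw [hpt, htu]; simp; omega
      omega
    obtain ⟨L, hLpos, hLb⟩ := ih u hulen huh' hul
    refine ⟨(c, d) :: L, ?_, ?_⟩
    · intro q hq
      rcases List.mem_cons.mp hq with rfl | hq
      · exact ⟨hc', hd'⟩
      · exact hLpos q hq
    · rw [blocks_cons, hLb, hpt, htu]

lemma count_take_blocks : ∀ (L : List (ℕ × ℕ)) (s : ℕ),
    (∀ k, ((L.take k).map Prod.snd).sum ≤ s + ((L.take k).map Prod.fst).sum) →
    ∀ k, ((blocks L).take k).count false ≤ s + ((blocks L).take k).count true := by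
  intro L
  induction L with
  | nil => intro s _ k; simp [blocks]
  | cons q t ih =>
    intro s h k
    have hd : q.2 ≤ s + q.1 := by simpa using h 1
    have ht : ∀ k, ((t.take k).map Prod.snd).sum ≤ (s + q.1 - q.2) + ((t.take k).map Prod.fst).sum := by
      intro k
      have := h (k + 1)
      simp only [List.take_succ_cons, List.map_cons, List.sum_cons] at this
      omega
    rw [blocks_cons]
    rw [List.take_append, List.take_append,
      List.take_replicate, List.take_replicate, List.length_replicate, List.length_replicate]
    simp only [List.count_append, List.count_replicate]
    simp only [show ((true == false) = true) = False by simp, show ((false == true) = true) = False by simp,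
      if_false, if_true, Nat.add_zero, Nat.zero_add, beq_self_eq_true, if_pos]
    rcases le_or_gt k (q.1 + q.2) with hk | hk
    · have h0 : k - q.1 - q.2 = 0 := by omega
      rw [h0]
      simp only [List.take_zero, List.count_nil]
      omega
    · have := ih (s + q.1 - q.2) ht (k - q.1 - q.2)
      omega

lemma blocks_take : ∀ (L : List (ℕ × ℕ)) (k : ℕ),
    (blocks L).take (((L.take k).map fun q => q.1 + q.2).sum) = blocks (L.take k) := by
  intro L
  induction L with
  | nil => intro k; simp [blocks]
  | cons q t ih =>
    intro k
    cases k with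
    | zero => simp [blocks]
    | succ k =>
      simp only [List.take_succ_cons, List.map_cons, List.sum_cons, blocks_cons]
      rw [List.take_append, List.take_append,
        List.take_replicate, List.length_replicate, List.take_replicate, List.length_replicate]
      have h1 : min (q.1 + q.2 + ((t.take k).map fun q => q.1 + q.2).sum) q.1 = q.1 := by omega
      have h2 : min (q.1 + q.2 + ((t.take k).map fun q => q.1 + q.2).sum - q.1) q.2 = q.2 := by omega
      have h3 : q.1 + q.2 + ((t.take k).map fun q => q.1 + q.2).sum - q.1 - q.2
          = ((t.take k).map fun q => q.1 + q.2).sum := by omega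
      rw [h1, h2, h3, ih k]

lemma reverse_range : ∀ n : ℕ, (List.range n).reverse = (List.range n).map (fun t => n - 1 - t) := by
  intro n
  induction n with
  | zero => rfl
  | succ n ih =>
    have lhs : (List.range (n + 1)).reverse = n :: (List.range n).reverse := by
      rw [List.range_succ]; simp
    have rhs : (List.range (n + 1)).map (fun t => n + 1 - 1 - t)
        = n :: (List.range n).map (fun t => n - 1 - t) := by
      rw [List.range_succ_eq_map]
      simp only [List.map_cons, List.map_map, Nat.sub_zero, Nat.add_sub_cancel]
      exact congrArg (n :: ·) (List.map_congr_left fun t _ => by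
        simp only [Function.comp_apply]; omega)
    rw [lhs, rhs, ih]

variable {n : ℕ} (m : ModBalanced n)

def spec : List (ℕ × ℕ) :=
  (List.range (m.l + 1)).map fun t =>
    (eB m (m.l - t) - eB m (m.l - t + 1), eA m (m.l - t) - eA m (m.l - t + 1))

lemma length_spec : (spec m).length = m.l + 1 := by simp [spec]

lemma toPath_eq : toPath m = blocks (spec m) := by
  unfold toPath blocks spec
  rw [List.flatMap_map, reverse_range]
  rw [List.flatMap_map]
  rfl

lemma eB_zero : eB m 0 = n := by simp [eB]
lemma eA_zero : eA m 0 = n := by simp [eA]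

lemma eB_of_gt {j : ℕ} (h : m.l < j) : eB m j = 0 := by
  unfold eB
  rw [dif_neg (by omega), dif_neg (by omega)]

lemma eA_of_gt {j : ℕ} (h : m.l < j) : eA m j = 0 := by
  unfold eA
  rw [dif_neg (by omega), dif_neg (by omega)]

lemma eB_val (i : Fin m.l) : eB m (i + 1) = m.b i := by
  unfold eB
  rw [dif_neg (by omega), dif_pos (by omega)]
  all_goals simp

lemma eA_val (i : Fin m.l) : eA m (i + 1) = m.a i + 1 := by
  unfold eA
  rw [dif_neg (by omega), dif_pos (by omega)]
  all_goals simp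

lemma eB_succ_le : ∀ j, eB m (j + 1) ≤ eB m j := by
  intro j
  rcases Nat.lt_or_ge m.l (j + 1) with h | h
  · rw [eB_of_gt m h]; exact Nat.zero_le _
  · rcases Nat.eq_zero_or_pos j with rfl | hj
    · rw [eB_zero, eB_val m ⟨0, by omega⟩]
      have := m.hbn ⟨0, by omega⟩
      omega
    · have h1 : eB m (j + 1) = m.b ⟨j, by omega⟩ := eB_val m ⟨j, by omega⟩
      have h2 : eB m j = m.b ⟨j - 1, by omega⟩ := by
        have := eB_val m ⟨j - 1, by omega⟩
        rwa [show j - 1 + 1 = j by omega] at this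
      rw [h1, h2]
      exact le_of_lt (m.hb (by simp [Fin.mk_lt_mk]; omega))

lemma eA_succ_le : ∀ j, eA m (j + 1) ≤ eA m j := by
  intro j
  rcases Nat.lt_or_ge m.l (j + 1) with h | h
  · rw [eA_of_gt m h]; exact Nat.zero_le _
  · rcases Nat.eq_zero_or_pos j with rfl | hj
    · rw [eA_zero, eA_val m ⟨0, by omega⟩]
      have := m.han ⟨0, by omega⟩
      omega
    · have h1 : eA m (j + 1) = m.a ⟨j, by omega⟩ + 1 := eA_val m ⟨j, by omega⟩
      have h2 : eA m j = m.a ⟨j - 1, by omega⟩ + 1 := by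
        have := eA_val m ⟨j - 1, by omega⟩
        rwa [show j - 1 + 1 = j by omega] at this
      rw [h1, h2]
      have := m.ha (show (⟨j - 1, by omega⟩ : Fin m.l) < ⟨j, by omega⟩ by
        simp [Fin.mk_lt_mk]; omega)
      omega

lemma eB_succ_lt (hn : 0 < n) {j : ℕ} (hj : j ≤ m.l) : eB m (j + 1) < eB m j := by
  rcases Nat.eq_zero_or_pos j with rfl | hj'
  · rw [eB_zero]
    rcases Nat.lt_or_ge m.l 1 with h | h
    · rw [eB_of_gt m h]; omega
    · rw [eB_val m ⟨0, by omega⟩]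
      have := m.hbn ⟨0, by omega⟩
      omega
  · have h2 : eB m j = m.b ⟨j - 1, by omega⟩ := by
      have := eB_val m ⟨j - 1, by omega⟩
      rwa [show j - 1 + 1 = j by omega] at this
    rcases Nat.lt_or_ge m.l (j + 1) with h | h
    · rw [eB_of_gt m h, h2]
      have := m.hab ⟨j - 1, by omega⟩
      omega
    · rw [eB_val m ⟨j, by omega⟩, h2]
      exact m.hb (by simp [Fin.mk_lt_mk]; omega)

lemma eA_succ_lt (hn : 0 < n) {j : ℕ} (hj : j ≤ m.l) : eA m (j + 1) < eA m j := by
  rcases Nat.eq_zero_or_pos j with rfl | hj'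
  · rw [eA_zero]
    rcases Nat.lt_or_ge m.l 1 with h | h
    · rw [eA_of_gt m h]; omega
    · rw [eA_val m ⟨0, by omega⟩]
      have := m.han ⟨0, by omega⟩
      omega
  · have h2 : eA m j = m.a ⟨j - 1, by omega⟩ + 1 := by
      have := eA_val m ⟨j - 1, by omega⟩
      rwa [show j - 1 + 1 = j by omega] at this
    rcases Nat.lt_or_ge m.l (j + 1) with h | h
    · rw [eA_of_gt m h, h2]
      omega
    · rw [eA_val m ⟨j, by omega⟩, h2]
      have := m.ha (show (⟨j - 1, by omega⟩ : Fin m.l) < ⟨j, by omega⟩ by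
        simp [Fin.mk_lt_mk]; omega)
      omega

lemma eA_le_eB : ∀ j, eA m j ≤ eB m j := by
  intro j
  rcases Nat.eq_zero_or_pos j with rfl | hj
  · rw [eA_zero, eB_zero]
  · rcases Nat.lt_or_ge m.l j with h | h
    · rw [eA_of_gt m h, eB_of_gt m h]
    · have hA : eA m j = m.a ⟨j - 1, by omega⟩ + 1 := by
        have := eA_val m ⟨j - 1, by omega⟩
        rwa [show j - 1 + 1 = j by omega] at this
      have hB : eB m j = m.b ⟨j - 1, by omega⟩ := by
        have := eB_val m ⟨j - 1, by omega⟩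
        rwa [show j - 1 + 1 = j by omega] at this
      rw [hA, hB]
      exact m.hab _

lemma sum_range_eB : ∀ k, k ≤ m.l + 1 →
    ((List.range k).map (fun t => eB m (m.l - t) - eB m (m.l - t + 1))).sum
      = eB m (m.l + 1 - k) := by
  intro k
  induction k with
  | zero =>
    intro _
    simp only [List.range_zero, List.map_nil, List.sum_nil, Nat.sub_zero]
    exact (eB_of_gt m (Nat.lt_succ_self _)).symm
  | succ k ih =>
    intro hk
    rw [List.range_succ, List.map_append, List.sum_append, ih (by omega)]
    simp only [List.map_cons, List.map_nil, List.sum_cons, List.sum_nil, Nat.add_zero]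
    have e1 : m.l + 1 - k = m.l - k + 1 := by omega
    have e2 : m.l + 1 - (k + 1) = m.l - k := by omega
    have h3 := eB_succ_le m (m.l - k)
    rw [e1, e2]
    omega

lemma sum_range_eA : ∀ k, k ≤ m.l + 1 →
    ((List.range k).map (fun t => eA m (m.l - t) - eA m (m.l - t + 1))).sum
      = eA m (m.l + 1 - k) := by
  intro k
  induction k with
  | zero =>
    intro _
    simp only [List.range_zero, List.map_nil, List.sum_nil, Nat.sub_zero]
    exact (eA_of_gt m (Nat.lt_succ_self _)).symm
  | succ k ih =>
    intro hk
    rw [List.range_succ, List.map_append, List.sum_append, ih (by omega)]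
    simp only [List.map_cons, List.map_nil, List.sum_cons, List.sum_nil, Nat.add_zero]
    have e1 : m.l + 1 - k = m.l - k + 1 := by omega
    have e2 : m.l + 1 - (k + 1) = m.l - k := by omega
    have h3 := eA_succ_le m (m.l - k)
    rw [e1, e2]
    omega

lemma spec_take {k : ℕ} (hk : k ≤ m.l + 1) :
    (spec m).take k = (List.range k).map (fun t =>
      (eB m (m.l - t) - eB m (m.l - t + 1), eA m (m.l - t) - eA m (m.l - t + 1))) := by
  unfold spec
  rw [← List.map_take, List.take_range, min_eq_left hk]

lemma sum_fst_spec {k : ℕ} (hk : k ≤ m.l + 1) :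
    (((spec m).take k).map Prod.fst).sum = eB m (m.l + 1 - k) := by
  rw [spec_take m hk, List.map_map]
  exact sum_range_eB m k hk

lemma sum_snd_spec {k : ℕ} (hk : k ≤ m.l + 1) :
    (((spec m).take k).map Prod.snd).sum = eA m (m.l + 1 - k) := by
  rw [spec_take m hk, List.map_map]
  exact sum_range_eA m k hk

lemma take_spec_all : (spec m).take (m.l + 1) = spec m := by
  rw [← length_spec m]
  exact List.take_length

lemma spec_fst_sum : ((spec m).map Prod.fst).sum = n := by
  have := sum_fst_spec m (le_refl (m.l + 1))
  rwa [take_spec_all, Nat.sub_self, eB_zero] at this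

lemma spec_snd_sum : ((spec m).map Prod.snd).sum = n := by
  have := sum_snd_spec m (le_refl (m.l + 1))
  rwa [take_spec_all, Nat.sub_self, eA_zero] at this

lemma snd_le_fst_spec (k : ℕ) :
    (((spec m).take k).map Prod.snd).sum ≤ (((spec m).take k).map Prod.fst).sum := by
  rcases le_or_gt k (m.l + 1) with hk | hk
  · rw [sum_fst_spec m hk, sum_snd_spec m hk]
    exact eA_le_eB m _
  · rw [List.take_of_length_le (by rw [length_spec]; omega)]
    rw [spec_fst_sum, spec_snd_sum]

lemma pos_spec (hn : 0 < n) : Pos (spec m) := by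
  intro q hq
  unfold spec at hq
  rw [List.mem_map] at hq
  obtain ⟨t, ht, rfl⟩ := hq
  rw [List.mem_range] at ht
  have h1 := eB_succ_lt m hn (show m.l - t ≤ m.l by omega)
  have h2 := eA_succ_lt m hn (show m.l - t ≤ m.l by omega)
  exact ⟨by omega, by omega⟩

lemma MB_ext {m1 m2 : ModBalanced n} (hl : m1.l = m2.l)
    (hA : ∀ (i : ℕ) (h1 : i < m1.l) (h2 : i < m2.l), m1.a ⟨i, h1⟩ = m2.a ⟨i, h2⟩)
    (hB : ∀ (i : ℕ) (h1 : i < m1.l) (h2 : i < m2.l), m1.b ⟨i, h1⟩ = m2.b ⟨i, h2⟩) :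
    m1 = m2 := by
  obtain ⟨l1, a1, b1, _, _, _, _, _⟩ := m1
  obtain ⟨l2, a2, b2, _, _, _, _, _⟩ := m2
  dsimp at hl hA hB
  subst hl
  have ha : a1 = a2 := funext fun i => by
    have := hA i i.2 i.2
    simpa using this
  have hb : b1 = b2 := funext fun i => by
    have := hB i i.2 i.2
    simpa using this
  subst ha hb
  rfl

def pSum (L : List (ℕ × ℕ)) (f : ℕ × ℕ → ℕ) (k : ℕ) : ℕ := ((L.take k).map f).sum

lemma pSum_zero (L : List (ℕ × ℕ)) (f : ℕ × ℕ → ℕ) : pSum L f 0 = 0 := rfl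

lemma pSum_succ (L : List (ℕ × ℕ)) (f : ℕ × ℕ → ℕ) (t : ℕ) (h : t < L.length) :
    pSum L f (t + 1) = pSum L f t + f L[t] := by
  unfold pSum
  rw [List.map_take, List.map_take, List.sum_take_succ _ t (by simpa using h),
    List.getElem_map]

lemma pSum_lt (L : List (ℕ × ℕ)) (f : ℕ × ℕ → ℕ) (hf : ∀ q ∈ L, 0 < f q)
    {k k' : ℕ} (hkk : k < k') (hk' : k' ≤ L.length) : pSum L f k < pSum L f k' := by
  unfold pSum
  rw [show k' = k + (k' - k) by omega, List.take_add, List.map_append, List.sum_append]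
  have hne : (L.drop k).take (k' - k) ≠ [] := by
    apply List.ne_nil_of_length_pos
    rw [List.length_take, List.length_drop]
    omega
  have hpos : 0 < (((L.drop k).take (k' - k)).map f).sum := by
    apply List.sum_pos
    · intro x hx
      rw [List.mem_map] at hx
      obtain ⟨q, hq, rfl⟩ := hx
      exact hf q (List.mem_of_mem_drop (List.mem_of_mem_take hq))
    · simpa using hne
  omega


def mkMB (n : ℕ) (L : List (ℕ × ℕ)) (hpos : Pos L) (hne : L ≠ [])
    (hBn : pSum L Prod.fst L.length = n) (hAn : pSum L Prod.snd L.length = n)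
    (hAB : ∀ k, k ≤ L.length → pSum L Prod.snd k ≤ pSum L Prod.fst k) :
    ModBalanced n where
  l := L.length - 1
  a := fun i => pSum L Prod.snd (L.length - 1 - ↑i) - 1
  b := fun i => pSum L Prod.fst (L.length - 1 - ↑i)
  ha := by
    have hLpos : 0 < L.length := List.length_pos_iff.mpr hne
    intro i j hij
    have hj := j.isLt
    have hij' := Fin.lt_def.mp hij
    have h1 : pSum L Prod.snd (L.length - 1 - ↑j) < pSum L Prod.snd (L.length - 1 - ↑i) :=
      pSum_lt L _ (fun q hq => (hpos q hq).2) (by omega) (by omega)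
    have h2 : pSum L Prod.snd 0 < pSum L Prod.snd (L.length - 1 - ↑j) :=
      pSum_lt L _ (fun q hq => (hpos q hq).2) (by omega) (by omega)
    rw [pSum_zero] at h2
    simp only
    omega
  hb := by
    have hLpos : 0 < L.length := List.length_pos_iff.mpr hne
    intro i j hij
    have hj := j.isLt
    have hij' := Fin.lt_def.mp hij
    exact pSum_lt L _ (fun q hq => (hpos q hq).1) (by omega) (by omega)
  hab := by
    have hLpos : 0 < L.length := List.length_pos_iff.mpr hne
    intro i
    have hi := i.isLt
    have h1 := hAB (L.length - 1 - ↑i) (by omega)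
    have h2 : pSum L Prod.snd 0 < pSum L Prod.snd (L.length - 1 - ↑i) :=
      pSum_lt L _ (fun q hq => (hpos q hq).2) (by omega) (by omega)
    rw [pSum_zero] at h2
    omega
  hbn := by
    have hLpos : 0 < L.length := List.length_pos_iff.mpr hne
    intro i
    have hi := i.isLt
    have h1 : pSum L Prod.fst (L.length - 1 - ↑i) < pSum L Prod.fst L.length :=
      pSum_lt L _ (fun q hq => (hpos q hq).1) (by omega) le_rfl
    omega
  han := by
    have hLpos : 0 < L.length := List.length_pos_iff.mpr hne
    intro i
    have hi := i.isLt
    have h1 : pSum L Prod.snd (L.length - 1 - ↑i) < pSum L Prod.snd L.length :=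
      pSum_lt L _ (fun q hq => (hpos q hq).2) (by omega) le_rfl
    have h2 : pSum L Prod.snd 0 < pSum L Prod.snd (L.length - 1 - ↑i) :=
      pSum_lt L _ (fun q hq => (hpos q hq).2) (by omega) (by omega)
    rw [pSum_zero] at h2
    omega

lemma spec_eq_of {n : ℕ} (m : ModBalanced n) (L : List (ℕ × ℕ)) (hLlen : L.length = m.l + 1)
    (hEB : ∀ j, j ≤ m.l + 1 → eB m j = pSum L Prod.fst (m.l + 1 - j))
    (hEA : ∀ j, j ≤ m.l + 1 → eA m j = pSum L Prod.snd (m.l + 1 - j)) : spec m = L := by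
  apply List.ext_getElem (by rw [length_spec, hLlen])
  intro t h1 h2
  rw [length_spec] at h1
  simp only [spec]
  simp only [List.getElem_map, List.getElem_range]
  have e1 : m.l + 1 - (m.l - t) = t + 1 := by omega
  have e2 : m.l - t + 1 ≤ m.l + 1 := by omega
  have e3 : m.l + 1 - (m.l - t + 1) = t := by omega
  have hB1 := hEB (m.l - t) (by omega)
  rw [e1] at hB1
  have hB2 := hEB (m.l - t + 1) e2
  rw [e3] at hB2
  have hA1 := hEA (m.l - t) (by omega)
  rw [e1] at hA1
  have hA2 := hEA (m.l - t + 1) e2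
  rw [e3] at hA2
  have hBs := pSum_succ L Prod.fst t (by omega)
  have hAs := pSum_succ L Prod.snd t (by omega)
  rw [hB1, hB2, hA1, hA2, hBs, hAs]
  simp

lemma spec_mkMB (n : ℕ) (L : List (ℕ × ℕ)) (hpos : Pos L) (hne : L ≠ [])
    (hBn : pSum L Prod.fst L.length = n) (hAn : pSum L Prod.snd L.length = n)
    (hAB : ∀ k, k ≤ L.length → pSum L Prod.snd k ≤ pSum L Prod.fst k) :
    spec (mkMB n L hpos hne hBn hAn hAB) = L := by
  have hLpos : 0 < L.length := List.length_pos_iff.mpr hne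
  set m := mkMB n L hpos hne hBn hAn hAB with hm
  have hml : m.l = L.length - 1 := rfl
  have hmb : ∀ i : Fin m.l, m.b i = pSum L Prod.fst (L.length - 1 - ↑i) := fun _ => rfl
  have hma : ∀ i : Fin m.l, m.a i = pSum L Prod.snd (L.length - 1 - ↑i) - 1 := fun _ => rfl
  apply spec_eq_of m L (by omega)
  · intro j hj
    rcases Nat.eq_zero_or_pos j with rfl | hj0
    · rw [eB_zero, Nat.sub_zero]
      rw [show m.l + 1 = L.length by omega]
      exact hBn.symm
    rcases Nat.lt_or_ge m.l j with hgt | hle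
    · have hj1 : j = m.l + 1 := by omega
      rw [eB_of_gt m hgt, hj1, Nat.sub_self, pSum_zero]
    · have hv : eB m j = m.b ⟨j - 1, by omega⟩ := by
        have := eB_val m ⟨j - 1, by omega⟩
        rwa [show j - 1 + 1 = j by omega] at this
      rw [hv, hmb]
      congr 1
      simp only
      omega
  · intro j hj
    rcases Nat.eq_zero_or_pos j with rfl | hj0
    · rw [eA_zero, Nat.sub_zero]
      rw [show m.l + 1 = L.length by omega]
      exact hAn.symm
    rcases Nat.lt_or_ge m.l j with hgt | hle
    · have hj1 : j = m.l + 1 := by omega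
      rw [eA_of_gt m hgt, hj1, Nat.sub_self, pSum_zero]
    · have hv : eA m j = m.a ⟨j - 1, by omega⟩ + 1 := by
        have := eA_val m ⟨j - 1, by omega⟩
        rwa [show j - 1 + 1 = j by omega] at this
      rw [hv, hma]
      have h2 : pSum L Prod.snd 0 < pSum L Prod.snd (L.length - 1 - (j - 1)) :=
        pSum_lt L _ (fun q hq => (hpos q hq).2) (by simp; omega) (by omega)
      rw [pSum_zero] at h2
      have he : L.length - 1 - (↑(⟨j - 1, by omega⟩ : Fin m.l)) = L.length - 1 - (j - 1) := by
        simp only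
      rw [he]
      have he2 : m.l + 1 - j = L.length - 1 - (j - 1) := by omega
      rw [he2]
      omega

lemma isDyck_toPath {n : ℕ} (m : ModBalanced n) : IsDyck n (toPath m) := by
  have hct : (toPath m).count true = n := by
    rw [toPath_eq, count_true_blocks, spec_fst_sum]
  have hcf : (toPath m).count false = n := by
    rw [toPath_eq, count_false_blocks, spec_snd_sum]
  refine ⟨?_, hct, ?_⟩
  · have := count_bool (toPath m)
    omega
  · intro k
    rw [toPath_eq]
    have := count_take_blocks (spec m) 0
      (fun k => by simpa using snd_le_fst_spec m k) k
    simpa using this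

lemma l_eq_zero (m : ModBalanced 0) : m.l = 0 := by
  by_contra h
  have := m.hbn ⟨0, by omega⟩
  omega

lemma toPath_zero (m : ModBalanced 0) : toPath m = [] := by
  obtain ⟨hlen, _, _⟩ := isDyck_toPath m
  rw [List.length_eq_zero_iff] at hlen
  · exact hlen

def emptyMB (n : ℕ) : ModBalanced n :=
  ⟨0, Fin.elim0, Fin.elim0, fun i => i.elim0, fun i => i.elim0, fun i => i.elim0,
    fun i => i.elim0, fun i => i.elim0⟩

lemma toPath_inj {n : ℕ} {m1 m2 : ModBalanced n} (h : toPath m1 = toPath m2) : m1 = m2 := by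
  rcases Nat.eq_zero_or_pos n with rfl | hn
  · have hl1 := l_eq_zero m1
    have hl2 := l_eq_zero m2
    exact MB_ext (by omega) (fun i h1 h2 => absurd h1 (by omega))
      (fun i h1 h2 => absurd h1 (by omega))
  · rw [toPath_eq, toPath_eq] at h
    have hspec := blocks_injOn (pos_spec m1 hn) (pos_spec m2 hn) h
    have hl : m1.l = m2.l := by
      have := congrArg List.length hspec
      rw [length_spec, length_spec] at this
      omega
    have hEB : ∀ j, j ≤ m1.l + 1 → eB m1 j = eB m2 j := by
      intro j hj
      have h1 := sum_fst_spec m1 (show m1.l + 1 - j ≤ m1.l + 1 by omega)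
      have h2 := sum_fst_spec m2 (show m1.l + 1 - j ≤ m2.l + 1 by omega)
      rw [hspec] at h1
      rw [show m1.l + 1 - (m1.l + 1 - j) = j by omega] at h1
      rw [show m2.l + 1 - (m1.l + 1 - j) = j by omega] at h2
      exact h1.symm.trans h2
    have hEA : ∀ j, j ≤ m1.l + 1 → eA m1 j = eA m2 j := by
      intro j hj
      have h1 := sum_snd_spec m1 (show m1.l + 1 - j ≤ m1.l + 1 by omega)
      have h2 := sum_snd_spec m2 (show m1.l + 1 - j ≤ m2.l + 1 by omega)
      rw [hspec] at h1
      rw [show m1.l + 1 - (m1.l + 1 - j) = j by omega] at h1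
      rw [show m2.l + 1 - (m1.l + 1 - j) = j by omega] at h2
      exact h1.symm.trans h2
    apply MB_ext hl
    · intro i hi1 hi2
      have hv1 : eA m1 (i + 1) = m1.a ⟨i, hi1⟩ + 1 := eA_val m1 ⟨i, hi1⟩
      have hv2 : eA m2 (i + 1) = m2.a ⟨i, hi2⟩ + 1 := eA_val m2 ⟨i, hi2⟩
      have := hEA (i + 1) (by omega)
      omega
    · intro i hi1 hi2
      have hv1 : eB m1 (i + 1) = m1.b ⟨i, hi1⟩ := eB_val m1 ⟨i, hi1⟩
      have hv2 : eB m2 (i + 1) = m2.b ⟨i, hi2⟩ := eB_val m2 ⟨i, hi2⟩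
      have := hEB (i + 1) (by omega)
      omega

lemma toPath_surj (n : ℕ) (p : List Bool) (hp : IsDyck n p) :
    ∃ m : ModBalanced n, toPath m = p := by
  obtain ⟨hlen, hct, hpre⟩ := hp
  rcases Nat.eq_zero_or_pos n with rfl | hn
  · have hp0 : p = [] := List.length_eq_zero_iff.mp (by omega)
    exact ⟨emptyMB 0, by rw [toPath_zero, hp0]⟩
  · have hcf : p.count false = n := by
      have := count_bool p
      omega
    have hpne : p ≠ [] := by
      apply List.ne_nil_of_length_pos
      omega
    have hhead : p.head? = some true := by
      cases p with
      | nil => exact absurd rfl hpne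
      | cons b t =>
        cases b
        · exfalso
          have := hpre 1
          simp [List.count_cons] at this
        · rfl
    have hlast : p.getLast? = some false := by
      rw [List.getLast?_eq_getLast hpne]
      congr 1
      by_contra hgl
      have hgl' : p.getLast hpne = true := by
        cases hx : p.getLast hpne
        · exact absurd hx hgl
        · rfl
      have hsplit := List.dropLast_concat_getLast hpne
      have h1 : p.count true = p.dropLast.count true + 1 := by
        conv_lhs => rw [← hsplit]
        rw [List.count_append, hgl']
        simp
      have h2 : p.count false = p.dropLast.count false := by
        conv_lhs => rw [← hsplit]
        rw [List.count_append, hgl']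
        simp
      have h3 : p.take p.dropLast.length = p.dropLast := by
        have := List.take_left (l₁ := p.dropLast) (l₂ := [p.getLast hpne])
        rwa [hsplit] at this
      have := hpre p.dropLast.length
      rw [h3] at this
      omega
    obtain ⟨L, hLpos, hLb⟩ := exists_blocks_aux p.length p le_rfl (Or.inl hhead) (Or.inl hlast)
    have hLne : L ≠ [] := by
      rintro rfl
      exact hpne (hLb.symm.trans rfl)
    have hBn : pSum L Prod.fst L.length = n := by
      unfold pSum
      rw [List.take_length, ← count_true_blocks, hLb, hct]
    have hAn : pSum L Prod.snd L.length = n := by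
      unfold pSum
      rw [List.take_length, ← count_false_blocks, hLb, hcf]
    have hAB : ∀ k, k ≤ L.length → pSum L Prod.snd k ≤ pSum L Prod.fst k := by
      intro k hk
      have h1 := hpre (((L.take k).map fun q => q.1 + q.2).sum)
      rw [← hLb, blocks_take, count_false_blocks, count_true_blocks] at h1
      exact h1
    refine ⟨mkMB n L hLpos hLne hBn hAn hAB, ?_⟩
    rw [toPath_eq, spec_mkMB, hLb]

end StmtAux

/-- The map sending a modified balanced partition of size `n` (in Frobenius notation) to
the above lattice path is a bijection onto the set of Dyck paths of length `2n`. -/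
theorem stmt_6 (n : ℕ) :
    Set.BijOn (toPath (n := n)) Set.univ {p : List Bool | IsDyck n p} := by
  refine ⟨fun m _ => StmtAux.isDyck_toPath m, fun m1 _ m2 _ h => StmtAux.toPath_inj h, ?_⟩
  intro p hp
  obtain ⟨m, hm⟩ := StmtAux.toPath_surj n p hp
  exact ⟨m, Set.mem_univ m, hm⟩
end

section
/- If T is a totally symmetric plane partition inside an (n−1,n−1,n−1)-box with diagonal partition diag(T) having Frobenius notation (a_1,…,a_l | b_1,…,b_l), then the partition π(T) with Frobenius notation (a_1,…,a_l | b_1+1,…,b_l+1) is a modified balanced partition of size n. -/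
/-- A plane partition inside an `(m,m,m)`-box, as a down-closed subset of `{1,…,m}^3`. -/
def DownClosed (m : ℕ) (T : Set (Fin m × Fin m × Fin m)) : Prop :=
  ∀ i j k i' j' k', (i, j, k) ∈ T → i' ≤ i → j' ≤ j → k' ≤ k → (i', j', k') ∈ T

/-- Total symmetry: invariance under all permutations of the three coordinates. -/
def TotSym (m : ℕ) (T : Set (Fin m × Fin m × Fin m)) : Prop :=
  ∀ i j k, (i, j, k) ∈ T →
    (j, i, k) ∈ T ∧ (i, k, j) ∈ T ∧ (j, k, i) ∈ T ∧ (k, i, j) ∈ T ∧ (k, j, i) ∈ T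

/-- The stack height `T_{i,i}` on the diagonal. -/
noncomputable def diagHt (m : ℕ) (T : Set (Fin m × Fin m × Fin m)) (i : Fin m) : ℕ :=
  Set.ncard {k : Fin m | (i, i, k) ∈ T}

/-- The `j`-th part (`1`-based) of `diag(T) = (T_{1,1},…,T_{m,m})'`. -/
noncomputable def diagPart (m : ℕ) (T : Set (Fin m × Fin m × Fin m)) (j : ℕ) : ℕ :=
  Set.ncard {i : Fin m | j ≤ diagHt m T i}

/-- The `j`-th part (`1`-based) of the conjugate of `diag(T)`. -/
noncomputable def diagConj (m : ℕ) (T : Set (Fin m × Fin m × Fin m)) (j : ℕ) : ℕ :=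
  Set.ncard {i : Fin m | j ≤ diagPart m T ((i : ℕ) + 1)}

lemma ncard_le_card (m : ℕ) (S : Set (Fin m)) : S.ncard ≤ m := by
  have := Set.ncard_le_ncard (Set.subset_univ S) Set.finite_univ
  simpa [Set.ncard_univ] using this

lemma mem_iff_lt_ncard {m : ℕ} (S : Set (Fin m))
    (h : ∀ x ∈ S, ∀ y, y ≤ x → y ∈ S) (x : Fin m) : x ∈ S ↔ (x : ℕ) < S.ncard := by
  constructor
  · intro hx
    have hsub : (Set.Iic x) ⊆ S := fun y hy => h x hx y hy
    have h1 : (Set.Iic x).ncard ≤ S.ncard :=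
      Set.ncard_le_ncard hsub (Set.toFinite S)
    have h2 : (Set.Iic x).ncard = (x : ℕ) + 1 := by
      rw [← Finset.coe_Iic, Set.ncard_coe_finset, Fin.card_Iic]
    omega
  · intro hx
    by_contra hxS
    have hsub : S ⊆ Set.Iio x := by
      intro y hy
      by_contra hyx
      exact hxS (h y hy x (le_of_not_gt hyx))
    have h1 : S.ncard ≤ (Set.Iio x).ncard := Set.ncard_le_ncard hsub (Set.toFinite _)
    have h2 : (Set.Iio x).ncard = (x : ℕ) := by
      rw [← Finset.coe_Iio, Set.ncard_coe_finset, Fin.card_Iio]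
    omega

lemma le_ncard_of_lt_mem {m r : ℕ} (hr : r ≤ m) (S : Set (Fin m))
    (h : ∀ x : Fin m, (x : ℕ) < r → x ∈ S) : r ≤ S.ncard := by
  have hsub : (fun y : Fin r => (Fin.castLE hr y : Fin m)) '' Set.univ ⊆ S := by
    rintro _ ⟨y, -, rfl⟩
    exact h _ y.isLt
  have h1 := Set.ncard_le_ncard hsub (Set.toFinite S)
  rwa [Set.ncard_image_of_injective _ (Fin.castLE_injective hr), Set.ncard_univ,
    Nat.card_eq_fintype_card, Fintype.card_fin] at h1

/-- `j+1 ≤ diagHt i ↔ (i,i,j) ∈ T` for down-closed `T`. -/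
lemma diagHt_iff {m : ℕ} {T : Set (Fin m × Fin m × Fin m)} (hdc : DownClosed m T)
    (i : Fin m) (k : Fin m) : (k : ℕ) + 1 ≤ diagHt m T i ↔ (i, i, k) ∈ T := by
  have := (mem_iff_lt_ncard {k : Fin m | (i, i, k) ∈ T}
    (fun x hx y hy => hdc i i x i i y hx le_rfl le_rfl hy) k).symm
  simpa [diagHt, Nat.succ_le_iff] using this

/-- The key TSPP inequality: on the Frobenius diagonal, `diagPart ≤ diagConj`. -/
lemma key {m : ℕ} {T : Set (Fin m × Fin m × Fin m)} (hdc : DownClosed m T)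
    (hsym : TotSym m T) (j : ℕ) (hj : j + 1 ≤ diagPart m T (j + 1)) :
    diagPart m T (j + 1) ≤ diagConj m T (j + 1) := by
  set r := diagPart m T (j + 1) with hr
  have hrm : r ≤ m := ncard_le_card m _
  have hjm : j < m := by omega
  set J : Fin m := ⟨j, hjm⟩ with hJ
  -- membership in the diagPart set, via diagHt_iff
  have hset : {i : Fin m | j + 1 ≤ diagHt m T i} = {i : Fin m | (i, i, J) ∈ T} := by
    ext i; simp only [Set.mem_setOf_eq]
    exact (by simpa using diagHt_iff hdc i J)
  have hS1dc : ∀ x ∈ {i : Fin m | (i, i, J) ∈ T}, ∀ y, y ≤ x →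
      y ∈ {i : Fin m | (i, i, J) ∈ T} :=
    fun x hx y hy => hdc x x J y y J hx hy hy le_rfl
  have hSmem : ∀ i : Fin m, (i, i, J) ∈ T ↔ (i : ℕ) < r := by
    intro i
    have := mem_iff_lt_ncard _ hS1dc i
    rwa [show Set.ncard {i : Fin m | (i, i, J) ∈ T} = r by rw [hr, diagPart, hset]] at this
  -- step: for all k < r, (J, J, k) ∈ T
  have hstep : ∀ k : Fin m, (k : ℕ) < r → (J, J, k) ∈ T := by
    intro k hk
    rcases le_or_gt (k : ℕ) j with h1 | h1
    · have hJJ : (J, J, J) ∈ T := (hSmem J).2 (by simp [hJ]; omega)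
      exact hdc J J J J J k hJJ le_rfl le_rfl (by simpa [Fin.le_def, hJ] using h1)
    · have hkk : (k, k, J) ∈ T := (hSmem k).2 hk
      have hJkk : (J, k, k) ∈ T := (hsym k k J hkk).2.2.2.1
      exact hdc J k k J J k hJkk le_rfl (by simpa [Fin.le_def, hJ] using h1.le) le_rfl
  -- for all i'' < r, diagPart (i''+1) ≥ j+1
  have hmain : ∀ x : Fin m, (x : ℕ) < r → j + 1 ≤ diagPart m T ((x : ℕ) + 1) := by
    intro x hx
    apply le_ncard_of_lt_mem (by omega)
    intro y hy
    have hJJx : (J, J, x) ∈ T := hstep x hx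
    have hyyx : (y, y, x) ∈ T :=
      hdc J J x y y x hJJx (by simp only [Fin.le_def, hJ]; omega)
        (by simp only [Fin.le_def, hJ]; omega) le_rfl
    simp only [Set.mem_setOf_eq]
    exact (diagHt_iff hdc y x).2 hyyx
  exact le_ncard_of_lt_mem hrm _ (fun x hx => hmain x hx)

/-- If `T` is a TSPP inside an `(n−1,n−1,n−1)`-box whose diagonal partition `diag(T)` has
Frobenius notation `(a_1,…,a_l | b_1,…,b_l)` (encoded via `diag(T)_i = a_i + i`,
`diag(T)'_i = b_i + i` for `i ≤ l`, and `diag(T)_{l+1} ≤ l`), then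
`π(T) = (a_1,…,a_l | b_1+1,…,b_l+1)` is a modified balanced partition of size `n`:
its Frobenius data satisfy `a_i < b_i + 1`, its largest part `a_1 + 1` is at most `n − 1`,
and it has at most `n` parts (`(b_1 + 1) + 1 ≤ n`). -/
theorem stmt_8 (n : ℕ) (hn : 1 ≤ n) (T : Set (Fin (n - 1) × Fin (n - 1) × Fin (n - 1)))
    (hdc : DownClosed (n - 1) T) (hsym : TotSym (n - 1) T)
    (l : ℕ) (a b : Fin l → ℕ)
    (hFa : ∀ i : Fin l, diagPart (n - 1) T ((i : ℕ) + 1) = a i + ((i : ℕ) + 1))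
    (hFb : ∀ i : Fin l, diagConj (n - 1) T ((i : ℕ) + 1) = b i + ((i : ℕ) + 1))
    (hDur : diagPart (n - 1) T (l + 1) ≤ l) :
    (∀ i, a i < b i + 1) ∧ (∀ i, (a i + 1) + 1 ≤ n) ∧ (∀ i, (b i + 1) + 1 ≤ n) := by
  have hA : ∀ i : Fin l, diagPart (n - 1) T ((i : ℕ) + 1) ≤ n - 1 :=
    fun i => ncard_le_card _ _
  have hB : ∀ i : Fin l, diagConj (n - 1) T ((i : ℕ) + 1) ≤ n - 1 :=
    fun i => ncard_le_card _ _
  refine ⟨fun i => ?_, fun i => ?_, fun i => ?_⟩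
  · have hk := key hdc hsym (i : ℕ) (by rw [hFa i]; omega)
    rw [hFa i, hFb i] at hk
    omega
  · have := hA i; rw [hFa i] at this; omega
  · have := hB i; rw [hFb i] at this; omega
end

section
/- The symmetric polynomial 𝒜_n(u,v;x_1,…,x_n) equals det_{1≤i,j≤n}( x_i^{n−j} p_j(x_i) ) / ∏_{1≤i<j≤n}(x_i − x_j), where p_j(x) = ∑_{k=0}^{j−1} x^k (−1+u+v−ux)^k v^{j−1−k}. -/
open Finset Equiv Matrix

namespace Stmt13

variable {R : Type*} [CommRing R]

def hp (v a : R) (j : ℕ) : R := ∑ k ∈ Finset.range (j+1), a^k * v^(j-k)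

def Esym {m : ℕ} (w : Fin m → R) (k : ℕ) : R :=
  ∑ T ∈ Finset.powersetCard k (Finset.univ : Finset (Fin m)), ∏ b ∈ T, w b

def pairsLT (n : ℕ) : Finset (Fin n × Fin n) :=
  Finset.univ.filter (fun p => p.1 < p.2)

def Mmat (n : ℕ) (x w : Fin n → R) (v : R) : Matrix (Fin n) (Fin n) R :=
  Matrix.of fun i j => x i ^ (n - 1 - (j:ℕ)) * hp v (x i * w i) (j:ℕ)

def Φ {n : ℕ} (p : Fin (n+1)) (e : Perm (Fin n)) : Perm (Fin (n+1)) :=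
  (p.cycleRange)⁻¹ * Equiv.Perm.decomposeFin.symm (0, e)

def lhsSum (n : ℕ) (x w : Fin n → R) (v : R) : R :=
  ∑ σ : Perm (Fin n), ((Equiv.Perm.sign σ : ℤ) : R) *
    ((∏ i : Fin n, x (σ i) ^ (i:ℕ)) * ∏ p ∈ pairsLT n, (v - x (σ p.1) * w (σ p.2)))

def eps (R : Type*) [CommRing R] (n : ℕ) : R := ∏ _p ∈ pairsLT n, (-1 : R)

lemma hp_mul (v a : R) (j : ℕ) : hp v a j * (a - v) = a^(j+1) - v^(j+1) := by
  simpa [hp] using geom_sum₂_mul a v (j+1)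

lemma vieta {m : ℕ} (w : Fin m → R) (t s : R) :
    ∏ b : Fin m, (t - s * w b)
      = ∑ k ∈ Finset.range (m+1), (-1:R)^k * Esym w k * (s^k * t^(m-k)) := by
  have h1 : ∏ b : Fin m, (t - s * w b) = ∏ b : Fin m, (-(s * w b) + t) := by
    apply Finset.prod_congr rfl; intros; ring
  rw [h1, Finset.prod_add, Finset.sum_powerset]
  have hcard : (Finset.univ : Finset (Fin m)).card = m := by simp
  rw [hcard]
  apply Finset.sum_congr rfl
  intro k hk
  have : ∀ T ∈ Finset.powersetCard k (Finset.univ : Finset (Fin m)),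
      (∏ b ∈ T, -(s * w b)) * ∏ b ∈ Finset.univ \ T, t
        = ((-1:R)^k * s^k * ∏ b ∈ T, w b) * t^(m-k) := by
    intro T hT
    obtain ⟨hsub, hTcard⟩ := Finset.mem_powersetCard.mp hT
    have h2 : ∏ b ∈ T, -(s * w b) = (-1:R)^k * s^k * ∏ b ∈ T, w b := by
      rw [show (fun b => -(s * w b)) = (fun b => ((-1:R)*s) * w b) by funext b; ring]
      rw [Finset.prod_mul_distrib, Finset.prod_const, hTcard, mul_pow]
    have h3 : ∏ _b ∈ Finset.univ \ T, t = t^(m-k) := by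
      rw [Finset.prod_const, Finset.card_sdiff_of_subset hsub, hcard, hTcard]
    rw [h2, h3]
  rw [Finset.sum_congr rfl this, ← Finset.sum_mul, ← Finset.mul_sum]
  unfold Esym
  ring

lemma claimE_domain {S : Type*} [CommRing S] [IsDomain S] {n : ℕ} (w : Fin (n+1) → S)
    (xx vv : S) (i : Fin (n+1)) (h : xx * w i ≠ vv) :
    ∑ j : Fin (n+1), ((-1:S)^(n-(j:ℕ)) * Esym w (n-(j:ℕ))) * (xx^(n-(j:ℕ)) * hp vv (xx * w i) (j:ℕ))
      = ∏ b ∈ Finset.univ.erase i, (vv - xx * w b) := by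
  apply mul_right_cancel₀ (b := xx * w i - vv) (sub_ne_zero.mpr h)
  rw [Fin.sum_univ_eq_sum_range
    (fun j => ((-1:S)^(n-j) * Esym w (n-j)) * (xx^(n-j) * hp vv (xx * w i) j)) (n+1)]
  have h1 : (∑ j ∈ Finset.range (n+1),
        ((-1:S)^(n-j) * Esym w (n-j)) * (xx^(n-j) * hp vv (xx * w i) j)) * (xx * w i - vv)
      = (∑ j ∈ Finset.range (n+1), ((-1:S)^(n-j) * Esym w (n-j)) * (w i)^(j+1)) * xx^(n+1)
        - ∑ j ∈ Finset.range (n+1), ((-1:S)^(n-j) * Esym w (n-j)) * (xx^(n-j) * vv^(j+1)) := by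
    rw [Finset.sum_mul, Finset.sum_mul, ← Finset.sum_sub_distrib]
    apply Finset.sum_congr rfl
    intro j hj
    have hj' : j ≤ n := by have := Finset.mem_range.mp hj; omega
    have e1 : xx^(n-j) * xx^(j+1) = xx^(n+1) := by rw [← pow_add]; congr 1; omega
    have e2 : hp vv (xx * w i) j * (xx * w i - vv) = (xx * w i)^(j+1) - vv^(j+1) :=
      hp_mul vv (xx * w i) j
    calc ((-1:S)^(n-j) * Esym w (n-j)) * (xx^(n-j) * hp vv (xx * w i) j) * (xx * w i - vv)
        = ((-1:S)^(n-j) * Esym w (n-j)) * (xx^(n-j) * ((xx * w i)^(j+1) - vv^(j+1))) := by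
          rw [← e2]; ring
      _ = ((-1:S)^(n-j) * Esym w (n-j)) * (w i)^(j+1) * xx^(n+1)
            - ((-1:S)^(n-j) * Esym w (n-j)) * (xx^(n-j) * vv^(j+1)) := by
          rw [← e1, mul_pow]; ring
  have hα : ∏ b : Fin (n+1), (vv - xx * w b)
      = (∑ j ∈ Finset.range (n+1), ((-1:S)^(n-j) * Esym w (n-j)) * (xx^(n-j) * vv^(j+1)))
        + (-1:S)^(n+1) * Esym w (n+1) * xx^(n+1) := by
    rw [vieta w vv xx, Finset.sum_range_succ, ← Finset.sum_range_reflect]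
    congr 1
    · apply Finset.sum_congr rfl
      intro j hj
      have hj' : j ≤ n := by have := Finset.mem_range.mp hj; omega
      have e : n+1-1-j = n-j := by omega
      have e2 : n+1-(n-j) = j+1 := by omega
      rw [e, e2, mul_assoc]
    · have : n+1-(n+1) = 0 := by omega
      rw [this, pow_zero, mul_one]
  have hβ : (0:S)
      = (∑ j ∈ Finset.range (n+1), ((-1:S)^(n-j) * Esym w (n-j)) * (w i)^(j+1))
        + (-1:S)^(n+1) * Esym w (n+1) := by
    have hz : ∏ b : Fin (n+1), (w i - (1:S) * w b) = 0 :=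
      Finset.prod_eq_zero (Finset.mem_univ i) (by ring)
    rw [vieta w (w i) 1, Finset.sum_range_succ, ← Finset.sum_range_reflect] at hz
    rw [← hz]
    congr 1
    · apply Finset.sum_congr rfl
      intro j hj
      have hj' : j ≤ n := by have := Finset.mem_range.mp hj; omega
      have e : n+1-1-j = n-j := by omega
      have e2 : n+1-(n-j) = j+1 := by omega
      rw [e, e2]; ring
    · have : n+1-(n+1) = 0 := by omega
      rw [this]; ring
  have hP : (vv - xx * w i) * ∏ b ∈ Finset.univ.erase i, (vv - xx * w b)
      = ∏ b : Fin (n+1), (vv - xx * w b) :=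
    Finset.mul_prod_erase Finset.univ (fun b => vv - xx * w b) (Finset.mem_univ i)
  linear_combination h1 - xx^(n+1) * hβ + hα + hP

lemma claimE {n : ℕ} (w : Fin (n+1) → R) (xx vv : R) (i : Fin (n+1)) :
    ∑ j : Fin (n+1), ((-1:R)^(n-(j:ℕ)) * Esym w (n-(j:ℕ))) * (xx^(n-(j:ℕ)) * hp vv (xx * w i) (j:ℕ))
      = ∏ b ∈ Finset.univ.erase i, (vv - xx * w b) := by
  classical
  have hne : (MvPolynomial.X (Sum.inr false) : MvPolynomial (Fin (n+1) ⊕ Bool) ℤ)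
      * MvPolynomial.X (Sum.inl i) ≠ MvPolynomial.X (Sum.inr true) := by
    intro hEq
    have h2 := congrArg
      (MvPolynomial.eval (Sum.elim (fun _ => (0:ℤ)) (fun b => bif b then 1 else 0))) hEq
    simp at h2
  have hgen := claimE_domain (S := MvPolynomial (Fin (n+1) ⊕ Bool) ℤ)
      (fun b => MvPolynomial.X (Sum.inl b))
      (MvPolynomial.X (Sum.inr false)) (MvPolynomial.X (Sum.inr true)) i hne
  have happ := congrArg (MvPolynomial.aeval (R := ℤ)
      (Sum.elim w (fun b => bif b then vv else xx)) : _ →ₐ[ℤ] R).toRingHom.toFun hgen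
  simp only [hp, Esym, RingHom.toFun_eq_coe, AlgHom.toRingHom_eq_coe, RingHom.coe_coe,
    map_sum, map_prod, _root_.map_mul, _root_.map_pow, _root_.map_sub, _root_.map_neg, _root_.map_one,
    MvPolynomial.aeval_X, Sum.elim_inl, Sum.elim_inr, Bool.cond_false, Bool.cond_true] at happ
  simpa only [hp, Esym] using happ

lemma prod_erase_eq {M : Type*} [CommMonoid M] {n : ℕ} (g : Fin (n+1) → M) (i : Fin (n+1)) :
    ∏ b ∈ Finset.univ.erase i, g b = ∏ b : Fin n, g (i.succAbove b) := by
  have himg : Finset.image i.succAbove Finset.univ = Finset.univ.erase i := by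
    ext b
    simp only [Finset.mem_image, Finset.mem_erase, Finset.mem_univ, and_true]
    constructor
    · rintro ⟨a, _, rfl⟩; exact Fin.succAbove_ne i a
    · intro hb; obtain ⟨a, ha⟩ := Fin.exists_succAbove_eq hb
      exact ⟨a, trivial, ha⟩
  rw [← himg, Finset.prod_image (fun a _ b _ h => Fin.succAbove_right_injective h)]

lemma det_Mmat_succ (n : ℕ) (x w : Fin (n+1) → R) (v : R) :
    (Mmat (n+1) x w v).det
      = ∑ p : Fin (n+1), (-1:R)^((p:ℕ)+n) *
          ((∏ b : Fin n, (v - x p * w (p.succAbove b))) *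
            ((∏ b : Fin n, x (p.succAbove b)) *
              (Mmat n (x ∘ p.succAbove) (w ∘ p.succAbove) v).det)) := by
  classical
  set γ : Fin (n+1) → R := fun j => (-1:R)^(n-(j:ℕ)) * Esym w (n-(j:ℕ)) with hγ
  set U : Matrix (Fin (n+1)) (Fin (n+1)) R :=
    Matrix.of (fun j k => if k = Fin.last n then γ j else if j = k then (1:R) else 0) with hU
  have hγlast : γ (Fin.last n) = 1 := by
    simp [hγ, Esym, Fin.val_last, Nat.sub_self, Finset.powersetCard_zero]
  have hUtri : U.det = 1 := by
    rw [Matrix.det_of_upperTriangular]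
    · have : ∀ j : Fin (n+1), U j j = if j = Fin.last n then γ j else 1 := by
        intro j; by_cases hj : j = Fin.last n <;> simp [hU, hj]
      rw [Finset.prod_congr rfl (fun j _ => this j), Finset.prod_ite_eq' Finset.univ (Fin.last n)
        (fun j => γ j)]
      simp [hγlast]
    · intro i j hij
      have hjlast : j ≠ Fin.last n := by
        intro h; rw [h] at hij; exact absurd hij (not_lt.mpr (Fin.le_last i))
      have hij' : i ≠ j := ne_of_gt hij
      simp only [hU, Matrix.of_apply, if_neg hjlast]
      rw [if_neg hij']
  have hMU : Mmat (n+1) x w v * U = Matrix.of fun i k =>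
      if k = Fin.last n then (∏ b : Fin n, (v - x i * w (i.succAbove b)))
      else Mmat (n+1) x w v i k := by
    ext i k
    rw [Matrix.mul_apply]
    by_cases hk : k = Fin.last n
    · subst hk
      have hUj : ∀ j, U j (Fin.last n) = γ j := fun j => if_pos rfl
      have hC := claimE w (x i) v i
      rw [prod_erase_eq (fun b => v - x i * w b) i] at hC
      show _ = if Fin.last n = Fin.last n then _ else _
      rw [if_pos rfl, ← hC]
      apply Finset.sum_congr rfl
      intro j _
      rw [hUj j]
      have hexp : (n + 1 - 1 - (j:ℕ)) = n - (j:ℕ) := by omega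
      simp only [hγ, Mmat, Matrix.of_apply, hexp]
      ring
    · have hterm : ∀ j, Mmat (n+1) x w v i j * U j k
          = if j = k then Mmat (n+1) x w v i k else 0 := by
        intro j
        by_cases hjk : j = k <;> simp [hU, hjk, hk]
      rw [Finset.sum_congr rfl (fun j _ => hterm j)]
      show _ = if k = Fin.last n then _ else _
      rw [if_neg hk]
      simp [Finset.sum_ite_eq']
  have hdet : (Mmat (n+1) x w v).det = (Mmat (n+1) x w v * U).det := by
    rw [Matrix.det_mul, hUtri, mul_one]
  rw [hdet, hMU, Matrix.det_succ_column _ (Fin.last n)]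
  apply Finset.sum_congr rfl
  intro p _
  have hentry : (Matrix.of fun i k =>
      if k = Fin.last n then (∏ b : Fin n, (v - x i * w (i.succAbove b)))
      else Mmat (n+1) x w v i k) p (Fin.last n) = ∏ b : Fin n, (v - x p * w (p.succAbove b)) := by
    simp
  have hsub : ((Matrix.of fun i k =>
      if k = Fin.last n then (∏ b : Fin n, (v - x i * w (i.succAbove b)))
      else Mmat (n+1) x w v i k).submatrix p.succAbove (Fin.last n).succAbove)
      = Matrix.diagonal (fun b => x (p.succAbove b)) * Mmat n (x ∘ p.succAbove) (w ∘ p.succAbove) v := by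
    ext a b
    have hb : (Fin.last n).succAbove b = Fin.castSucc b := by rw [Fin.succAbove_last]
    have hbne : (Fin.castSucc b) ≠ Fin.last n := (Fin.castSucc_lt_last b).ne
    have hexp : (n + 1 - 1 - (b:ℕ)) = (n - 1 - (b:ℕ)) + 1 := by
      have : (b:ℕ) < n := b.isLt
      omega
    simp only [Matrix.submatrix_apply, hb, Matrix.of_apply, if_neg hbne, Mmat,
      Matrix.diagonal_mul, Fin.coe_castSucc, hexp, Function.comp_apply]
    rw [pow_succ]
    ring
  rw [hentry, hsub, Matrix.det_mul, Matrix.det_diagonal, Fin.val_last]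
  ring

lemma Φ_zero {n : ℕ} (p : Fin (n+1)) (e : Perm (Fin n)) : Φ p e 0 = p := by
  simp [Φ, Equiv.Perm.mul_apply, Equiv.Perm.inv_def, Fin.cycleRange_symm_zero]

lemma Φ_succ {n : ℕ} (p : Fin (n+1)) (e : Perm (Fin n)) (i : Fin n) :
    Φ p e i.succ = p.succAbove (e i) := by
  simp [Φ, Equiv.Perm.mul_apply, Equiv.Perm.inv_def, Fin.cycleRange_symm_succ]

lemma Φ_sign {n : ℕ} (p : Fin (n+1)) (e : Perm (Fin n)) :
    Equiv.Perm.sign (Φ p e) = (-1)^(p:ℕ) * Equiv.Perm.sign e := by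
  rw [Φ, _root_.map_mul, Equiv.Perm.sign_inv, Fin.sign_cycleRange,
    Equiv.Perm.decomposeFin.symm_sign, if_pos rfl, one_mul]

lemma sum_perm_decomp {M : Type*} [AddCommMonoid M] {n : ℕ} (G : Perm (Fin (n+1)) → M) :
    ∑ σ : Perm (Fin (n+1)), G σ = ∑ p : Fin (n+1), ∑ e : Perm (Fin n), G (Φ p e) := by
  have hbij : Function.Bijective (fun pe : Fin (n+1) × Perm (Fin n) => Φ pe.1 pe.2) := by
    rw [Fintype.bijective_iff_injective_and_card]
    constructor
    · rintro ⟨p, e⟩ ⟨q, f⟩ h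
      have h0 : p = q := by
        have := congrArg (fun σ : Perm (Fin (n+1)) => σ 0) h
        simpa [Φ_zero] using this
      subst h0
      have h1 : Equiv.Perm.decomposeFin.symm (0, e) = Equiv.Perm.decomposeFin.symm (0, f) :=
        mul_left_cancel h
      have h2 : ((0 : Fin (n+1)), e) = ((0 : Fin (n+1)), f) :=
        Equiv.Perm.decomposeFin.symm.injective h1
      simp only [Prod.mk.injEq] at h2
      simp [h2.2]
    · simp [Fintype.card_perm, Fintype.card_fin, Nat.factorial_succ]
  calc ∑ σ : Perm (Fin (n+1)), G σ
      = ∑ pe : Fin (n+1) × Perm (Fin n), G (Φ pe.1 pe.2) :=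
        (Fintype.sum_bijective _ hbij _ _ (fun pe => rfl)).symm
    _ = ∑ p : Fin (n+1), ∑ e : Perm (Fin n), G (Φ p e) := Fintype.sum_prod_type _

lemma pairsLT_split {M : Type*} [CommMonoid M] {n : ℕ} (f : Fin (n+1) → Fin (n+1) → M) :
    ∏ p ∈ pairsLT (n+1), f p.1 p.2
      = (∏ j : Fin n, f 0 j.succ) * ∏ q ∈ pairsLT n, f q.1.succ q.2.succ := by
  classical
  have hsplit := Finset.prod_filter_mul_prod_filter_not (pairsLT (n+1))
    (fun p => p.1 = 0) (fun p => f p.1 p.2)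
  rw [← hsplit]
  congr 1
  · have h1 : (pairsLT (n+1)).filter (fun p => p.1 = 0)
        = Finset.image (fun j : Fin n => ((0 : Fin (n+1)), j.succ)) Finset.univ := by
      ext p
      simp only [pairsLT, Finset.mem_filter, Finset.mem_univ, true_and, Finset.mem_image]
      constructor
      · rintro ⟨hlt, h0⟩
        have hne : p.2 ≠ 0 := by
          intro h2; rw [h0, h2] at hlt; exact lt_irrefl _ hlt
        obtain ⟨j, hj⟩ := Fin.exists_succ_eq.mpr hne
        exact ⟨j, by rw [hj, ← h0]⟩
      · rintro ⟨j, rfl⟩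
        exact ⟨Fin.succ_pos j, rfl⟩
    rw [h1, Finset.prod_image (fun a _ b _ h => by
      simpa [Prod.mk.injEq, Fin.succ_inj] using h)]
  · have h2 : (pairsLT (n+1)).filter (fun p => ¬ p.1 = 0)
        = Finset.image (fun q : Fin n × Fin n => (q.1.succ, q.2.succ)) (pairsLT n) := by
      ext p
      simp only [pairsLT, Finset.mem_filter, Finset.mem_univ, true_and, Finset.mem_image]
      constructor
      · rintro ⟨hlt, h0⟩
        obtain ⟨a, ha⟩ := Fin.exists_succ_eq.mpr h0
        have h20 : p.2 ≠ 0 := by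
          intro h2; rw [h2] at hlt; exact absurd hlt (Fin.not_lt_zero _)
        obtain ⟨b, hb⟩ := Fin.exists_succ_eq.mpr h20
        refine ⟨(a, b), ?_, ?_⟩
        · have : a < b := by
            rw [← Fin.succ_lt_succ_iff, ha, hb]; exact hlt
          simpa using this
        · simp [ha, hb]
      · rintro ⟨⟨a, b⟩, hab, rfl⟩
        simp only [Finset.mem_filter] at hab
        exact ⟨Fin.succ_lt_succ_iff.mpr hab, Fin.succ_ne_zero a⟩
    rw [h2, Finset.prod_image (fun a _ b _ h => by
      simpa [Prod.ext_iff, Fin.succ_inj] using h)]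

lemma eps_succ (n : ℕ) : eps R (n+1) = (-1:R)^n * eps R n := by
  have := pairsLT_split (M := R) (n := n) (fun _ _ => (-1 : R))
  simpa [eps] using this

lemma lemD : ∀ (n : ℕ) (x w : Fin n → R) (v : R),
    lhsSum n x w v = eps R n * (Mmat n x w v).det := by
  intro n
  induction n with
  | zero =>
    intro x w v
    simp [lhsSum, eps, pairsLT, Mmat, Matrix.det_fin_zero]
  | succ n IH =>
    intro x w v
    rw [lhsSum, sum_perm_decomp]
    have hterm : ∀ (p : Fin (n+1)),
        ∑ e : Perm (Fin n), ((Equiv.Perm.sign (Φ p e) : ℤ) : R) *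
          ((∏ i : Fin (n+1), x (Φ p e i) ^ (i:ℕ)) *
            ∏ q ∈ pairsLT (n+1), (v - x (Φ p e q.1) * w (Φ p e q.2)))
        = (-1:R)^(p:ℕ) * ((∏ b : Fin n, (v - x p * w (p.succAbove b))) *
            ((∏ b : Fin n, x (p.succAbove b)) *
              lhsSum n (x ∘ p.succAbove) (w ∘ p.succAbove) v)) := by
      intro p
      rw [lhsSum]; simp only [Finset.mul_sum]
      apply Finset.sum_congr rfl
      intro e _
      have hsign : ((Equiv.Perm.sign (Φ p e) : ℤ) : R)
          = (-1:R)^(p:ℕ) * ((Equiv.Perm.sign e : ℤ) : R) := by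
        rw [Φ_sign]
        push_cast
        ring
      have hpow : ∏ i : Fin (n+1), x (Φ p e i) ^ (i:ℕ)
          = (∏ b : Fin n, x (p.succAbove b)) *
            ∏ i : Fin n, (x ∘ p.succAbove) (e i) ^ (i:ℕ) := by
        rw [Fin.prod_univ_succ]
        simp only [Φ_zero, Φ_succ, Fin.val_zero, pow_zero, one_mul, Fin.val_succ]
        rw [Finset.prod_congr rfl (fun i _ => pow_succ' (x (p.succAbove (e i))) (i:ℕ)),
          Finset.prod_mul_distrib]
        congr 1
        exact Equiv.prod_comp e (fun b => x (p.succAbove b))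
      have hpair : ∏ q ∈ pairsLT (n+1), (v - x (Φ p e q.1) * w (Φ p e q.2))
          = (∏ b : Fin n, (v - x p * w (p.succAbove b))) *
            ∏ q ∈ pairsLT n, (v - (x ∘ p.succAbove) (e q.1) * (w ∘ p.succAbove) (e q.2)) := by
        rw [pairsLT_split (fun a b => v - x (Φ p e a) * w (Φ p e b))]
        congr 1
        · simp only [Φ_zero, Φ_succ]
          exact Equiv.prod_comp e (fun b => v - x p * w (p.succAbove b))
        · apply Finset.prod_congr rfl
          intro q _
          rw [Φ_succ, Φ_succ]
          rfl
      rw [hsign, hpow, hpair]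
      ring
    rw [Finset.sum_congr rfl (fun p _ => hterm p)]
    rw [Finset.sum_congr rfl (fun p _ => by
      rw [IH (x ∘ p.succAbove) (w ∘ p.succAbove) v])]
    rw [eps_succ, det_Mmat_succ, Finset.mul_sum]
    apply Finset.sum_congr rfl
    intro p _
    have h2 : (-1:R)^n * (-1:R)^((p:ℕ)+n) = (-1:R)^(p:ℕ) := by
      rw [pow_add, ← mul_assoc, mul_comm ((-1:R)^n), mul_assoc, ← pow_add, ← two_mul,
        pow_mul, neg_one_sq, one_pow, mul_one]
    calc (-1:R)^(p:ℕ) * ((∏ b : Fin n, (v - x p * w (p.succAbove b))) *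
            ((∏ b : Fin n, x (p.succAbove b)) *
              (eps R n * (Mmat n (x ∘ p.succAbove) (w ∘ p.succAbove) v).det)))
        = ((-1:R)^n * (-1:R)^((p:ℕ)+n)) * ((∏ b : Fin n, (v - x p * w (p.succAbove b))) *
            ((∏ b : Fin n, x (p.succAbove b)) *
              (eps R n * (Mmat n (x ∘ p.succAbove) (w ∘ p.succAbove) v).det))) := by rw [h2]
      _ = (-1:R)^n * eps R n * ((-1:R)^((p:ℕ)+n) *
            ((∏ b : Fin n, (v - x p * w (p.succAbove b))) *
              ((∏ b : Fin n, x (p.succAbove b)) *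
                (Mmat n (x ∘ p.succAbove) (w ∘ p.succAbove) v).det))) := by ring

end Stmt13

/-- The symmetric function
`𝒜_n(u,v;x) = Asym[ ∏ x_i^{i−1} ∏_{i<j} (v + (1−u−v)x_i + u x_i x_j) ] / ∏_{i<j}(x_j − x_i)`,
where `Asym f(x) = ∑_{σ∈S_n} sgn(σ) f(x_{σ(1)},…,x_{σ(n)})`. -/
noncomputable def Apoly (F : Type*) [Field F] (n : ℕ) (u v : F) (x : Fin n → F) : F :=
  (∑ σ : Equiv.Perm (Fin n), (Equiv.Perm.sign σ : ℤ) •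
      ((∏ i : Fin n, x (σ i) ^ (i : ℕ)) *
        ∏ p ∈ Finset.univ.filter (fun p : Fin n × Fin n => p.1 < p.2),
          (v + (1 - u - v) * x (σ p.1) + u * x (σ p.1) * x (σ p.2)))) /
    ∏ p ∈ Finset.univ.filter (fun p : Fin n × Fin n => p.1 < p.2), (x p.2 - x p.1)

/-- The Schur polynomial `s_λ(x) = det(x_i^{λ_j + n − j}) / ∏_{i<j}(x_i − x_j)`
(indices `1`-based; below `λ` is given `0`-based as `lam : Fin n → ℕ`). -/
noncomputable def schur (F : Type*) [Field F] (n : ℕ) (lam : Fin n → ℕ)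
    (x : Fin n → F) : F :=
  Matrix.det (Matrix.of fun i j : Fin n => x i ^ (lam j + (n - 1 - (j : ℕ)))) /
    ∏ p ∈ Finset.univ.filter (fun p : Fin n × Fin n => p.1 < p.2), (x p.1 - x p.2)

/-- `𝒜_n(u,v;x) = det_{1≤i,j≤n}( x_i^{n−j} p_j(x_i) ) / ∏_{1≤i<j≤n}(x_i − x_j)`, where
`p_j(x) = ∑_{k=0}^{j−1} x^k (−1+u+v−ux)^k v^{j−1−k}` (below `j : Fin n` encodes the
`1`-based column index `j+1`). -/

theorem stmt_13 (F : Type*) [Field F] (n : ℕ) (u v : F) (x : Fin n → F)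
    (hx : Function.Injective x) :
    Apoly F n u v x =
      Matrix.det (Matrix.of fun i j : Fin n =>
          x i ^ (n - 1 - (j : ℕ)) *
            ∑ k ∈ Finset.range ((j : ℕ) + 1),
              x i ^ k * (-1 + u + v - u * x i) ^ k * v ^ ((j : ℕ) - k)) /
        ∏ p ∈ Finset.univ.filter (fun p : Fin n × Fin n => p.1 < p.2), (x p.1 - x p.2) := by
  classical
  set w : Fin n → F := fun b => -1 + u + v - u * x b with hw
  have key := Stmt13.lemD (R := F) n x w v
  have hN : (∑ σ : Equiv.Perm (Fin n), (Equiv.Perm.sign σ : ℤ) •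
      ((∏ i : Fin n, x (σ i) ^ (i : ℕ)) *
        ∏ p ∈ Finset.univ.filter (fun p : Fin n × Fin n => p.1 < p.2),
          (v + (1 - u - v) * x (σ p.1) + u * x (σ p.1) * x (σ p.2))))
      = Stmt13.lhsSum n x w v := by
    rw [Stmt13.lhsSum]
    apply Finset.sum_congr rfl
    intro σ _
    rw [zsmul_eq_mul]
    congr 1
    congr 1
    apply Finset.prod_congr rfl
    intro q _
    simp only [hw]
    ring
  have hM : Matrix.det (Matrix.of fun i j : Fin n =>
          x i ^ (n - 1 - (j : ℕ)) *
            ∑ k ∈ Finset.range ((j : ℕ) + 1),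
              x i ^ k * (-1 + u + v - u * x i) ^ k * v ^ ((j : ℕ) - k))
      = (Stmt13.Mmat n x w v).det := by
    congr 1
    ext i j
    simp only [Stmt13.Mmat, Matrix.of_apply, Stmt13.hp, hw]
    congr 1
    apply Finset.sum_congr rfl
    intro k _
    rw [mul_pow]
  have hPne : (∏ p ∈ Finset.univ.filter (fun p : Fin n × Fin n => p.1 < p.2),
      (x p.1 - x p.2)) ≠ 0 := by
    rw [Finset.prod_ne_zero_iff]
    intro q hq
    have hlt : q.1 < q.2 := (Finset.mem_filter.mp hq).2
    exact sub_ne_zero.mpr (fun h => absurd (hx h) (ne_of_lt hlt))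
  have hD : (∏ p ∈ Finset.univ.filter (fun p : Fin n × Fin n => p.1 < p.2), (x p.2 - x p.1))
      = Stmt13.eps F n * ∏ p ∈ Finset.univ.filter (fun p : Fin n × Fin n => p.1 < p.2),
          (x p.1 - x p.2) := by
    simp only [Stmt13.eps, Stmt13.pairsLT]
    rw [← Finset.prod_mul_distrib]
    apply Finset.prod_congr rfl
    intro q _
    ring
  have heps2 : Stmt13.eps F n * Stmt13.eps F n = 1 := by
    simp only [Stmt13.eps, Stmt13.pairsLT]
    rw [← Finset.prod_mul_distrib]
    simp
  have hepsne : Stmt13.eps F n ≠ 0 := by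
    intro h
    rw [h, mul_zero] at heps2
    exact zero_ne_one heps2
  rw [Apoly, hN, key, hD, hM]
  exact mul_div_mul_left _ _ hepsne
end

section
/- Let (p_j(x))_{j=1}^n be polynomials with p_j(x) = ∑_{k≥0} a_{j,k} x^k. Then det_{1≤i,j≤n}( x_i^{n−j} p_j(x_i) ) / ∏_{1≤i<j≤n}(x_i − x_j) = ∑_λ s_λ(x_1,…,x_n) · det_{1≤i,j≤n}( a_{j, λ_i + j − i} ), where the sum is over partitions λ with at most n parts and s_λ denotes the Schur polynomial in n variables. -/
section Aux

open Finset Matrix Equiv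


private lemma perm_apply_inv_self {α : Type*} (e : Equiv.Perm α) (x : α) : e (e⁻¹ x) = x :=
  e.apply_symm_apply x

private lemma smono_add_le {n : ℕ} {f : Fin n → ℕ} (hf : StrictMono f) :
    ∀ (d : ℕ) (i j : Fin n), (j : ℕ) = (i : ℕ) + d → f i + d ≤ f j := by
  intro d
  induction d with
  | zero =>
    intro i j h
    have hij : i = j := Fin.ext (by omega)
    simp [hij]
  | succ d ih =>
    intro i j h
    have hj : (i : ℕ) + d < n := by have := j.isLt; omega
    have h1 := ih i ⟨(i : ℕ) + d, hj⟩ rfl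
    have h2 : f ⟨(i : ℕ) + d, hj⟩ < f j := hf (by simp [Fin.lt_def]; omega)
    omega

private lemma smono_le {n : ℕ} {f : Fin n → ℕ} (hf : StrictMono f) (i j : Fin n)
    (hij : (i : ℕ) ≤ j) : f i + ((j : ℕ) - (i : ℕ)) ≤ f j :=
  smono_add_le hf _ i j (by omega)

private lemma sorted_facts {n D : ℕ} {r : Fin n → ℕ} {ρ : Equiv.Perm (Fin n)}
    (hr : ∀ j, r j ≤ D)
    (hinj : Function.Injective (fun j : Fin n => r j + (n - 1 - (j : ℕ))))
    (hρ : ρ = Fin.revPerm.trans (Tuple.sort (fun j : Fin n => r j + (n - 1 - (j : ℕ))))) :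
    (∀ j : Fin n, (n - 1 - (j : ℕ)) ≤ r (ρ j) + (n - 1 - ((ρ j : Fin n) : ℕ))) ∧
    (∀ j : Fin n, r (ρ j) + (n - 1 - ((ρ j : Fin n) : ℕ)) ≤ D + (n - 1 - (j : ℕ))) ∧
    (∀ i j : Fin n, (i : ℕ) ≤ (j : ℕ) →
        r (ρ j) + (n - 1 - ((ρ j : Fin n) : ℕ)) + ((j : ℕ) - (i : ℕ))
          ≤ r (ρ i) + (n - 1 - ((ρ i : Fin n) : ℕ))) := by
  subst hρ
  set ν : Fin n → ℕ := fun j : Fin n => r j + (n - 1 - (j : ℕ)) with hνdef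
  set g : Fin n → ℕ := fun j => ν (Tuple.sort ν j) with hgdef
  have hg : StrictMono g :=
    (Tuple.monotone_sort ν).strictMono_of_injective (hinj.comp (Tuple.sort ν).injective)
  have hρ : ∀ j : Fin n, r ((Fin.revPerm.trans (Tuple.sort ν)) j)
      + (n - 1 - (((Fin.revPerm.trans (Tuple.sort ν)) j : Fin n) : ℕ)) = g (Fin.rev j) :=
    fun j => rfl
  have hrev : ∀ j : Fin n, (Fin.rev j : ℕ) = n - 1 - (j : ℕ) := by
    intro j; simp [Fin.rev]; omega
  have hlow : ∀ m : Fin n, (m : ℕ) ≤ g m := by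
    intro m
    have h0 : (0 : ℕ) < n := m.pos
    have h1 := smono_le hg ⟨0, h0⟩ m (by simp)
    have h2 : ((⟨0, h0⟩ : Fin n) : ℕ) = 0 := rfl
    omega
  have hhigh : ∀ m : Fin n, g m ≤ D + (m : ℕ) := by
    intro m
    have h0 : (0 : ℕ) < n := m.pos
    have hne : ((⟨n - 1, by omega⟩ : Fin n) : ℕ) = n - 1 := rfl
    have h1 := smono_le hg m ⟨n - 1, by omega⟩ (by rw [hne]; omega)
    have h3 := hr (Tuple.sort ν ⟨n - 1, by omega⟩)
    have hb : ((Tuple.sort ν ⟨n - 1, by omega⟩ : Fin n) : ℕ) ≤ n - 1 := by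
      have := (Tuple.sort ν ⟨n - 1, by omega⟩).isLt; omega
    have hgv : g ⟨n - 1, by omega⟩ = r (Tuple.sort ν ⟨n - 1, by omega⟩) +
        (n - 1 - ((Tuple.sort ν ⟨n - 1, by omega⟩ : Fin n) : ℕ)) := rfl
    have := m.isLt
    omega
  refine ⟨?_, ?_, ?_⟩
  · intro j
    rw [hρ]
    have := hlow (Fin.rev j)
    rw [hrev] at this
    exact this
  · intro j
    rw [hρ]
    have := hhigh (Fin.rev j)
    rw [hrev] at this
    exact this
  · intro i j hij
    rw [hρ, hρ]
    have h1 := smono_le hg (Fin.rev j) (Fin.rev i) (by rw [hrev, hrev]; omega)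
    rw [hrev, hrev] at h1
    have hi := i.isLt
    have hj := j.isLt
    omega

private lemma key_s14 (F : Type*) [Field F] (n D : ℕ) (x : Fin n → F) (a : Fin n → ℕ → F)
    (ha : ∀ j k, D < k → a j k = 0) :
    Matrix.det (Matrix.of fun i j : Fin n =>
        x i ^ (n - 1 - (j : ℕ)) * ∑ k ∈ Finset.range (D + 1), a j k * x i ^ k)
    = ∑ lam ∈ (Finset.univ : Finset (Fin n → Fin (D + 1))).filter
          (fun lam => ∀ i j : Fin n, i ≤ j → lam j ≤ lam i),
        Matrix.det (Matrix.of fun i j : Fin n => x i ^ ((lam j : ℕ) + (n - 1 - (j : ℕ)))) *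
          Matrix.det (Matrix.of fun i j : Fin n =>
            if (i : ℕ) ≤ (lam i : ℕ) + (j : ℕ)
            then a j ((lam i : ℕ) + (j : ℕ) - (i : ℕ)) else 0) := by
  classical
  -- Step A : multilinear expansion
  have hA : Matrix.det (Matrix.of fun i j : Fin n =>
        x i ^ (n - 1 - (j : ℕ)) * ∑ k ∈ Finset.range (D + 1), a j k * x i ^ k)
      = ∑ r ∈ Fintype.piFinset (fun _ : Fin n => Finset.range (D + 1)),
          (∏ j, a j (r j)) *
            Matrix.det (Matrix.of fun i j : Fin n => x i ^ (r j + (n - 1 - (j : ℕ)))) := by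
    have hM : (Matrix.of fun i j : Fin n =>
        x i ^ (n - 1 - (j : ℕ)) * ∑ k ∈ Finset.range (D + 1), a j k * x i ^ k)
        = (Matrix.of fun j i : Fin n =>
            ∑ k ∈ Finset.range (D + 1), a j k * x i ^ (k + (n - 1 - (j : ℕ))))ᵀ := by
      ext i j
      simp only [Matrix.transpose_apply, Matrix.of_apply, Finset.mul_sum]
      refine Finset.sum_congr rfl fun k _ => by rw [pow_add]; ring
    rw [hM, Matrix.det_transpose]
    have h2 : (Matrix.of fun j i : Fin n =>
        ∑ k ∈ Finset.range (D + 1), a j k * x i ^ (k + (n - 1 - (j : ℕ))))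
        = fun j => ∑ k ∈ Finset.range (D + 1),
            (fun i => a j k * x i ^ (k + (n - 1 - (j : ℕ)))) := by
      ext j i
      simp
    show Matrix.detRowAlternating _ = _
    rw [h2]
    show (Matrix.detRowAlternating : (Fin n → F) [⋀^Fin n]→ₗ[F] F).toMultilinearMap
        (fun j => ∑ k ∈ Finset.range (D + 1),
          (fun i => a j k * x i ^ (k + (n - 1 - (j : ℕ))))) = _
    rw [(Matrix.detRowAlternating : (Fin n → F) [⋀^Fin n]→ₗ[F] F).toMultilinearMap.map_sum_finset
      (fun j k => fun i => a j k * x i ^ (k + (n - 1 - (j : ℕ)))) (fun _ => Finset.range (D + 1))]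
    refine Finset.sum_congr rfl fun r _ => ?_
    show Matrix.det (Matrix.of fun j i : Fin n =>
        a j (r j) * x i ^ (r j + (n - 1 - (j : ℕ)))) = _
    have hmc := Matrix.det_mul_column (fun j => a j (r j))
      (Matrix.of fun j i : Fin n => x i ^ (r j + (n - 1 - (j : ℕ))))
    simp only [Matrix.of_apply] at hmc
    rw [hmc, ← Matrix.det_transpose]
    congr 1
  rw [hA]
  -- Step B : restrict to injective exponent vectors
  have hB : ∑ r ∈ Fintype.piFinset (fun _ : Fin n => Finset.range (D + 1)),
        (∏ j, a j (r j)) *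
          Matrix.det (Matrix.of fun i j : Fin n => x i ^ (r j + (n - 1 - (j : ℕ))))
      = ∑ r ∈ (Fintype.piFinset (fun _ : Fin n => Finset.range (D + 1))).filter
            (fun r => Function.Injective (fun j : Fin n => r j + (n - 1 - (j : ℕ)))),
          (∏ j, a j (r j)) *
            Matrix.det (Matrix.of fun i j : Fin n => x i ^ (r j + (n - 1 - (j : ℕ)))) := by
    rw [Finset.sum_filter_of_ne]
    intro r _ hne
    by_contra hni
    apply hne
    obtain ⟨i, j, hij, hne'⟩ := Function.not_injective_iff.mp hni
    have hdet : Matrix.det (Matrix.of fun i j : Fin n => x i ^ (r j + (n - 1 - (j : ℕ)))) = 0 := by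
      refine Matrix.det_zero_of_column_eq hne' fun k => ?_
      simp [Matrix.of_apply, hij]
    rw [hdet, mul_zero]
  rw [hB]
  -- Step C : expand RHS determinant via Leibniz
  have hC : ∀ lam : Fin n → Fin (D + 1),
      Matrix.det (Matrix.of fun i j : Fin n =>
          if (i : ℕ) ≤ (lam i : ℕ) + (j : ℕ)
          then a j ((lam i : ℕ) + (j : ℕ) - (i : ℕ)) else 0)
      = ∑ σ : Equiv.Perm (Fin n), Equiv.Perm.sign σ •
          ∏ i, (if ((σ i : Fin n) : ℕ) ≤ (lam (σ i) : ℕ) + (i : ℕ)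
            then a i ((lam (σ i) : ℕ) + (i : ℕ) - ((σ i : Fin n) : ℕ)) else 0) :=
    fun lam => Matrix.det_apply _
  refine Eq.trans ?_ ((Finset.sum_congr rfl fun lam _ => by rw [hC lam, Finset.mul_sum]).symm)
  rw [← Finset.sum_product']
  refine Eq.trans ?_ (Finset.sum_filter_of_ne
    (p := fun p : (Fin n → Fin (D + 1)) × Equiv.Perm (Fin n) => ∀ i : Fin n,
      ((p.2 i : Fin n) : ℕ) ≤ (p.1 (p.2 i) : ℕ) + (i : ℕ) ∧
      (p.1 (p.2 i) : ℕ) + (i : ℕ) - ((p.2 i : Fin n) : ℕ) ≤ D) ?_)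
  swap
  · -- invalid pairs give zero terms
    intro p _ hne i
    by_contra hbad
    apply hne
    have hzero : (∏ i, (if ((p.2 i : Fin n) : ℕ) ≤ (p.1 (p.2 i) : ℕ) + (i : ℕ)
        then a i ((p.1 (p.2 i) : ℕ) + (i : ℕ) - ((p.2 i : Fin n) : ℕ)) else 0)) = 0 := by
      refine Finset.prod_eq_zero (Finset.mem_univ i) ?_
      by_cases hc : ((p.2 i : Fin n) : ℕ) ≤ (p.1 (p.2 i) : ℕ) + (i : ℕ)
      · rw [if_pos hc]
        refine ha i _ ?_
        omega
      · rw [if_neg hc]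
    rw [hzero, smul_zero, mul_zero]
  -- Step D : the bijection
  refine Finset.sum_nbij'
    (i := fun r => (fun j : Fin n =>
        (⟨(r ((Fin.revPerm.trans (Tuple.sort (fun j : Fin n => r j + (n - 1 - (j : ℕ))))) j)
            + (n - 1 - (((Fin.revPerm.trans (Tuple.sort (fun j : Fin n => r j + (n - 1 - (j : ℕ))))) j : Fin n) : ℕ))
            - (n - 1 - (j : ℕ))) % (D + 1),
          Nat.mod_lt _ (Nat.succ_pos D)⟩ : Fin (D + 1)),
      (Fin.revPerm.trans (Tuple.sort (fun j : Fin n => r j + (n - 1 - (j : ℕ)))))⁻¹))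
    (j := fun p => fun j : Fin n => (p.1 (p.2 j) : ℕ) + (j : ℕ) - ((p.2 j : Fin n) : ℕ))
    ?_ ?_ ?_ ?_ ?_
  · -- (1) forward map lands in the target
    intro r hrmem
    rw [Finset.mem_filter, Fintype.mem_piFinset] at hrmem
    obtain ⟨hrpi, hinj⟩ := hrmem
    have hr : ∀ j, r j ≤ D := fun j => by
      have := hrpi j; rw [Finset.mem_range] at this; omega
    obtain ⟨F1, F2, F3⟩ := sorted_facts (D := D) hr hinj rfl
    set E := Fin.revPerm.trans (Tuple.sort (fun j : Fin n => r j + (n - 1 - (j : ℕ)))) with hEdef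
    have hmod : ∀ j : Fin n,
        (r (E j) + (n - 1 - ((E j : Fin n) : ℕ)) - (n - 1 - (j : ℕ))) % (D + 1)
          = r (E j) + (n - 1 - ((E j : Fin n) : ℕ)) - (n - 1 - (j : ℕ)) := by
      intro j
      have h2 := F2 j
      exact Nat.mod_eq_of_lt (by omega)
    rw [Finset.mem_filter, Finset.mem_product, Finset.mem_filter]
    refine ⟨⟨⟨Finset.mem_univ _, ?_⟩, Finset.mem_univ _⟩, ?_⟩
    · intro i j hij
      simp only [Fin.mk_le_mk]
      rw [hmod i, hmod j]
      have h3 := F3 i j hij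
      have h1 := F1 j
      have hi := i.isLt
      have hj := j.isLt
      omega
    · intro i
      dsimp only
      have hEu : E (E⁻¹ i) = i := perm_apply_inv_self E i
      have hm := hmod (E⁻¹ i)
      have h1 := F1 (E⁻¹ i)
      rw [hEu] at hm h1 ⊢
      have hri := hr i
      have hi := i.isLt
      have hu := (E⁻¹ i).isLt
      constructor <;> omega
  · -- (2) backward map lands in the source
    intro p hp
    rw [Finset.mem_filter, Finset.mem_product, Finset.mem_filter] at hp
    obtain ⟨⟨⟨-, hdec⟩, -⟩, hval⟩ := hp
    rw [Finset.mem_filter, Fintype.mem_piFinset]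
    constructor
    · intro j
      rw [Finset.mem_range]
      have := (hval j).2
      omega
    · intro u v huv
      have hkey : ∀ j : Fin n,
          (p.1 (p.2 j) : ℕ) + (j : ℕ) - ((p.2 j : Fin n) : ℕ) + (n - 1 - (j : ℕ))
            = (p.1 (p.2 j) : ℕ) + (n - 1 - ((p.2 j : Fin n) : ℕ)) := by
        intro j
        have h1 := (hval j).1
        have h2 := j.isLt
        have h3 := (p.2 j).isLt
        omega
      simp only at huv
      rw [hkey u, hkey v] at huv
      have hσ : p.2 u = p.2 v := by
        rcases lt_trichotomy (p.2 u) (p.2 v) with h | h | h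
        · exfalso
          have hle := hdec (p.2 u) (p.2 v) (le_of_lt h)
          rw [Fin.le_def] at hle
          rw [Fin.lt_def] at h
          have := (p.2 v).isLt
          omega
        · exact h
        · exfalso
          have hle := hdec (p.2 v) (p.2 u) (le_of_lt h)
          rw [Fin.le_def] at hle
          rw [Fin.lt_def] at h
          have := (p.2 u).isLt
          omega
      exact (p.2).injective hσ
  · -- (3) left inverse
    intro r hrmem
    rw [Finset.mem_filter, Fintype.mem_piFinset] at hrmem
    obtain ⟨hrpi, hinj⟩ := hrmem
    have hr : ∀ j, r j ≤ D := fun j => by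
      have := hrpi j; rw [Finset.mem_range] at this; omega
    obtain ⟨F1, F2, F3⟩ := sorted_facts (D := D) hr hinj rfl
    set E := Fin.revPerm.trans (Tuple.sort (fun j : Fin n => r j + (n - 1 - (j : ℕ)))) with hEdef
    have hmod : ∀ j : Fin n,
        (r (E j) + (n - 1 - ((E j : Fin n) : ℕ)) - (n - 1 - (j : ℕ))) % (D + 1)
          = r (E j) + (n - 1 - ((E j : Fin n) : ℕ)) - (n - 1 - (j : ℕ)) := by
      intro j
      have h2 := F2 j
      exact Nat.mod_eq_of_lt (by omega)
    funext j
    dsimp only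
    have hEu : E (E⁻¹ j) = j := perm_apply_inv_self E j
    have hm := hmod (E⁻¹ j)
    have h1 := F1 (E⁻¹ j)
    rw [hEu] at hm h1 ⊢
    have hri := hr j
    have hj := j.isLt
    have hu := (E⁻¹ j).isLt
    omega
  · -- (4) right inverse
    intro p hp
    rw [Finset.mem_filter, Finset.mem_product, Finset.mem_filter] at hp
    obtain ⟨⟨⟨-, hdec⟩, -⟩, hval⟩ := hp
    dsimp only
    set g : Fin n → ℕ :=
      fun j : Fin n => (p.1 (p.2 j) : ℕ) + (j : ℕ) - ((p.2 j : Fin n) : ℕ) + (n - 1 - (j : ℕ))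
      with hgdef
    have hgapp : ∀ j : Fin n, g j
        = (p.1 (p.2 j) : ℕ) + (j : ℕ) - ((p.2 j : Fin n) : ℕ) + (n - 1 - (j : ℕ)) := fun _ => rfl
    have hkey : ∀ j : Fin n, g j = (p.1 (p.2 j) : ℕ) + (n - 1 - ((p.2 j : Fin n) : ℕ)) := by
      intro j
      have h1 := (hval j).1
      have h2 := j.isLt
      have h3 := (p.2 j).isLt
      rw [hgapp]
      omega
    have hmu_anti : ∀ u v : Fin n, u ≤ v →
        (p.1 v : ℕ) + (n - 1 - (v : ℕ)) ≤ (p.1 u : ℕ) + (n - 1 - (u : ℕ)) := by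
      intro u v huv
      have h1 := hdec u v huv
      rw [Fin.le_def] at h1 huv
      have := v.isLt
      omega
    have hinj : Function.Injective g := by
      intro u v huv
      rw [hkey u, hkey v] at huv
      have hσ : p.2 u = p.2 v := by
        rcases lt_trichotomy (p.2 u) (p.2 v) with h | h | h
        · exfalso
          have hle := hdec (p.2 u) (p.2 v) (le_of_lt h)
          rw [Fin.le_def] at hle
          rw [Fin.lt_def] at h
          have := (p.2 v).isLt
          omega
        · exact h
        · exfalso
          have hle := hdec (p.2 v) (p.2 u) (le_of_lt h)
          rw [Fin.le_def] at hle
          rw [Fin.lt_def] at h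
          have := (p.2 u).isLt
          omega
      exact (p.2).injective hσ
    have hmono : Monotone (g ∘ (Fin.revPerm.trans (p.2)⁻¹)) := by
      intro u v huv
      simp only [Function.comp_apply, Equiv.trans_apply, Fin.revPerm_apply]
      rw [hkey, hkey, perm_apply_inv_self, perm_apply_inv_self]
      exact hmu_anti _ _ (Fin.rev_le_rev.mpr huv)
    have hsorteq := Tuple.comp_sort_eq_comp_iff_monotone.mpr hmono
    have hperm : (Fin.revPerm.trans (p.2)⁻¹) = Tuple.sort g :=
      Equiv.ext fun i => hinj (congrFun hsorteq i)
    have hE : Fin.revPerm.trans (Tuple.sort g) = (p.2)⁻¹ := by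
      rw [← hperm]
      exact Equiv.ext fun i => by
        simp only [Equiv.trans_apply, Fin.revPerm_apply, Fin.rev_rev]
    have hEj : ∀ j : Fin n, (Fin.revPerm.trans (Tuple.sort g)) j = (p.2)⁻¹ j :=
      fun j => by rw [hE]
    refine Prod.ext ?_ ?_
    · funext j
      refine Fin.ext ?_
      show ((p.1 (p.2 ((Fin.revPerm.trans (Tuple.sort g)) j)) : ℕ)
            + (((Fin.revPerm.trans (Tuple.sort g)) j : Fin n) : ℕ)
            - ((p.2 ((Fin.revPerm.trans (Tuple.sort g)) j) : Fin n) : ℕ)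
            + (n - 1 - (((Fin.revPerm.trans (Tuple.sort g)) j : Fin n) : ℕ))
            - (n - 1 - (j : ℕ))) % (D + 1) = ((p.1 j : ℕ))
      rw [hEj j, perm_apply_inv_self]
      have h1 := (p.1 j).isLt
      have h2 := j.isLt
      have h3 := ((p.2)⁻¹ j).isLt
      have h4 := (hval ((p.2)⁻¹ j)).1
      rw [perm_apply_inv_self] at h4
      rw [Nat.mod_eq_of_lt (by omega)]
      omega
    · show (Fin.revPerm.trans (Tuple.sort g))⁻¹ = p.2
      rw [hE, inv_inv]
  · -- (5) the terms agree
    intro r hrmem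
    rw [Finset.mem_filter, Fintype.mem_piFinset] at hrmem
    obtain ⟨hrpi, hinj⟩ := hrmem
    have hr : ∀ j, r j ≤ D := fun j => by
      have := hrpi j; rw [Finset.mem_range] at this; omega
    obtain ⟨F1, F2, F3⟩ := sorted_facts (D := D) hr hinj rfl
    set E := Fin.revPerm.trans (Tuple.sort (fun j : Fin n => r j + (n - 1 - (j : ℕ)))) with hEdef
    have hmod : ∀ j : Fin n,
        (r (E j) + (n - 1 - ((E j : Fin n) : ℕ)) - (n - 1 - (j : ℕ))) % (D + 1)
          = r (E j) + (n - 1 - ((E j : Fin n) : ℕ)) - (n - 1 - (j : ℕ)) := by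
      intro j
      have h2 := F2 j
      exact Nat.mod_eq_of_lt (by omega)
    dsimp only
    -- the x-determinant picks up the sign of E
    have hXeq : (Matrix.of fun i j : Fin n =>
          x i ^ ((r (E j) + (n - 1 - ((E j : Fin n) : ℕ)) - (n - 1 - (j : ℕ))) % (D + 1)
            + (n - 1 - (j : ℕ))))
        = (Matrix.of fun i j : Fin n => x i ^ (r j + (n - 1 - (j : ℕ)))).submatrix id E := by
      ext i j
      simp only [Matrix.of_apply, Matrix.submatrix_apply, id_eq]
      congr 1
      have h1 := F1 j
      have h2 := hmod j
      omega
    rw [hXeq, Matrix.det_permute']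
    -- the coefficient product
    have hprod : (∏ i : Fin n,
        if ((E⁻¹ i : Fin n) : ℕ) ≤
            (r (E (E⁻¹ i)) + (n - 1 - ((E (E⁻¹ i) : Fin n) : ℕ)) - (n - 1 - ((E⁻¹ i : Fin n) : ℕ))) % (D + 1)
              + (i : ℕ)
        then a i ((r (E (E⁻¹ i)) + (n - 1 - ((E (E⁻¹ i) : Fin n) : ℕ)) - (n - 1 - ((E⁻¹ i : Fin n) : ℕ))) % (D + 1)
              + (i : ℕ) - ((E⁻¹ i : Fin n) : ℕ))
        else 0) = ∏ j, a j (r j) := by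
      refine Finset.prod_congr rfl fun i _ => ?_
      have hEu : E (E⁻¹ i) = i := perm_apply_inv_self E i
      have hm := hmod (E⁻¹ i)
      have h1 := F1 (E⁻¹ i)
      rw [hEu] at hm h1
      simp only [hEu, hm]
      have hri := hr i
      have hi := i.isLt
      have hu := (E⁻¹ i).isLt
      rw [if_pos (by omega)]
      congr 1
      omega
    rw [hprod, Equiv.Perm.sign_inv]
    rcases Int.units_eq_one_or (Equiv.Perm.sign E) with hs | hs <;>
      rw [hs] <;> simp <;> ring

end Aux

/-- Let `p_j(x) = ∑_k a_{j,k} x^k` be polynomials (with `a_{j,k} = 0` for `k > D`).  Then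
`det( x_i^{n−j} p_j(x_i) ) / ∏_{i<j}(x_i − x_j)
  = ∑_λ s_λ(x) · det_{1≤i,j≤n}( a_{j, λ_i + j − i} )`,
the sum being over all partitions `λ` with at most `n` parts (only those with
`λ_1 ≤ D` contribute, so the sum is restricted accordingly); entries with negative
index `λ_i + j − i < 0` are `0`. -/
theorem stmt_14 (F : Type*) [Field F] (n D : ℕ) (x : Fin n → F)
    (hx : Function.Injective x) (a : Fin n → ℕ → F)
    (ha : ∀ j k, D < k → a j k = 0) :
    Matrix.det (Matrix.of fun i j : Fin n =>
        x i ^ (n - 1 - (j : ℕ)) * ∑ k ∈ Finset.range (D + 1), a j k * x i ^ k) /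
      ∏ p ∈ Finset.univ.filter (fun p : Fin n × Fin n => p.1 < p.2), (x p.1 - x p.2)
    = ∑ lam ∈ (Finset.univ : Finset (Fin n → Fin (D + 1))).filter
          (fun lam => ∀ i j : Fin n, i ≤ j → lam j ≤ lam i),
        schur F n (fun i => (lam i : ℕ)) x *
          Matrix.det (Matrix.of fun i j : Fin n =>
            if (i : ℕ) ≤ (lam i : ℕ) + (j : ℕ)
            then a j ((lam i : ℕ) + (j : ℕ) - (i : ℕ)) else 0) := by
    classical
  have hV : (∏ p ∈ Finset.univ.filter (fun p : Fin n × Fin n => p.1 < p.2),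
      (x p.1 - x p.2)) ≠ 0 := by
    rw [Finset.prod_ne_zero_iff]
    intro p hp
    rw [Finset.mem_filter] at hp
    exact sub_ne_zero.mpr fun h => absurd (hx h) (ne_of_lt hp.2)
  simp only [schur, div_mul_eq_mul_div]
  rw [← Finset.sum_div, key_s14 F n D x a ha]
end
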